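/- arXiv:1007.3098 — 5 statements merged into one kernel-verified Lean document; each statement's English description precedes it below -/
import Mathlib

section
/- (von Neumann trace inequality) Let A and B be two n×n real matrices with singular values σ_1(A) ≥ σ_2(A) ≥ … ≥ σ_n(A) and σ_1(B) ≥ σ_2(B) ≥ … ≥ σ_n(B), respectively. Then |Tr(AB)| ≤ Σ_{i=1}^n σ_i(A) σ_i(B). -/
open Matrix

/-- `(U, σ, V)` is a (reduced) singular value decomposition of the real `n × m` matrix `B`:
`U` and `V` have orthonormal columns, `σ` is a nonincreasing list of nonnegative reals
(the singular values of `B`), and `B = U diag(σ) Vᵀ`. -/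
def IsSVD {n m k : ℕ} (B : Matrix (Fin n) (Fin m) ℝ) (U : Matrix (Fin n) (Fin k) ℝ)
    (σ : Fin k → ℝ) (V : Matrix (Fin m) (Fin k) ℝ) : Prop :=
  Uᵀ * U = 1 ∧ Vᵀ * V = 1 ∧ Antitone σ ∧ (∀ i, 0 ≤ σ i) ∧ B = U * diagonal σ * Vᵀ

section Aux
open Finset

lemma abel_rep {n : ℕ} {a : ℕ → ℝ} (han : a n = 0) {i : ℕ} (hi : i < n) :
    a i = ∑ k ∈ range n, if i ≤ k then a k - a (k+1) else 0 := by
  rw [← Finset.sum_filter]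
  have : (range n).filter (i ≤ ·) = Finset.Ico i n := by
    ext x; simp [Finset.mem_Ico, and_comm]
  rw [this, Finset.sum_Ico_eq_sub _ hi.le, Finset.sum_range_sub' a, Finset.sum_range_sub' a, han]
  ring

lemma swap4 {M : Type*} [AddCommMonoid M] (s t u v : Finset ℕ) (f : ℕ → ℕ → ℕ → ℕ → M) :
    ∑ i ∈ s, ∑ j ∈ t, ∑ k ∈ u, ∑ l ∈ v, f i j k l
      = ∑ k ∈ u, ∑ l ∈ v, ∑ i ∈ s, ∑ j ∈ t, f i j k l := by
  have h1 : ∀ i, ∑ j ∈ t, ∑ k ∈ u, ∑ l ∈ v, f i j k l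
      = ∑ k ∈ u, ∑ j ∈ t, ∑ l ∈ v, f i j k l := fun i => Finset.sum_comm
  simp_rw [h1]
  rw [Finset.sum_comm]
  refine Finset.sum_congr rfl fun k _ => ?_
  have h2 : ∀ i, ∑ j ∈ t, ∑ l ∈ v, f i j k l = ∑ l ∈ v, ∑ j ∈ t, f i j k l :=
    fun i => Finset.sum_comm
  simp_rw [h2]
  exact Finset.sum_comm

lemma swap3 {M : Type*} [AddCommMonoid M] (s u v : Finset ℕ) (f : ℕ → ℕ → ℕ → M) :
    ∑ i ∈ s, ∑ k ∈ u, ∑ l ∈ v, f i k l = ∑ k ∈ u, ∑ l ∈ v, ∑ i ∈ s, f i k l := by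
  rw [Finset.sum_comm]
  exact Finset.sum_congr rfl fun k _ => Finset.sum_comm

lemma key_rearrangement (n : ℕ) (a b : ℕ → ℝ) (S : ℕ → ℕ → ℝ)
    (ha : ∀ k < n, a (k+1) ≤ a k) (han : a n = 0)
    (hb : ∀ k < n, b (k+1) ≤ b k) (hbn : b n = 0)
    (hS0 : ∀ i j, 0 ≤ S i j)
    (hrow : ∀ i < n, ∑ j ∈ range n, S i j ≤ 1)
    (hcol : ∀ j < n, ∑ i ∈ range n, S i j ≤ 1) :
    ∑ i ∈ range n, ∑ j ∈ range n, a i * b j * S i j ≤ ∑ i ∈ range n, a i * b i := by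
  set δ : ℕ → ℝ := fun k => a k - a (k+1) with hδ
  set ε : ℕ → ℝ := fun l => b l - b (l+1) with hε
  have hδ0 : ∀ k < n, 0 ≤ δ k := fun k hk => sub_nonneg.mpr (ha k hk)
  have hε0 : ∀ l < n, 0 ≤ ε l := fun l hl => sub_nonneg.mpr (hb l hl)
  -- LHS as Abel double sum
  have hL : ∑ i ∈ range n, ∑ j ∈ range n, a i * b j * S i j
      = ∑ k ∈ range n, ∑ l ∈ range n, (δ k * ε l) *
          (∑ i ∈ range n, ∑ j ∈ range n,
            ((if i ≤ k then (1:ℝ) else 0) * (if j ≤ l then (1:ℝ) else 0)) * S i j) := by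
    calc ∑ i ∈ range n, ∑ j ∈ range n, a i * b j * S i j
        = ∑ i ∈ range n, ∑ j ∈ range n, ∑ k ∈ range n, ∑ l ∈ range n, (δ k * ε l) *
            (((if i ≤ k then (1:ℝ) else 0) * (if j ≤ l then (1:ℝ) else 0)) * S i j) := by
          refine Finset.sum_congr rfl fun i hi => Finset.sum_congr rfl fun j hj => ?_
          rw [abel_rep han (mem_range.mp hi), abel_rep hbn (mem_range.mp hj)]
          rw [Finset.sum_mul, Finset.sum_mul]
          refine Finset.sum_congr rfl fun k hk => ?_
          rw [Finset.mul_sum, Finset.sum_mul]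
          refine Finset.sum_congr rfl fun l hl => ?_
          by_cases h1 : i ≤ k <;> by_cases h2 : j ≤ l <;> simp [h1, h2, hδ, hε]
      _ = _ := by
          rw [swap4]
          exact Finset.sum_congr rfl fun k _ => Finset.sum_congr rfl fun l _ => by
            rw [Finset.mul_sum]; exact Finset.sum_congr rfl fun i _ => by
              rw [Finset.mul_sum]
  -- RHS as Abel double sum
  have hR : ∑ i ∈ range n, a i * b i
      = ∑ k ∈ range n, ∑ l ∈ range n, (δ k * ε l) *
          (∑ i ∈ range n, (if i ≤ k then (1:ℝ) else 0) * (if i ≤ l then (1:ℝ) else 0)) := by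
    calc ∑ i ∈ range n, a i * b i
        = ∑ i ∈ range n, ∑ k ∈ range n, ∑ l ∈ range n, (δ k * ε l) *
            ((if i ≤ k then (1:ℝ) else 0) * (if i ≤ l then (1:ℝ) else 0)) := by
          refine Finset.sum_congr rfl fun i hi => ?_
          rw [abel_rep han (mem_range.mp hi), abel_rep hbn (mem_range.mp hi), Finset.sum_mul]
          refine Finset.sum_congr rfl fun k hk => ?_
          rw [Finset.mul_sum]
          refine Finset.sum_congr rfl fun l hl => ?_
          by_cases h1 : i ≤ k <;> by_cases h2 : i ≤ l <;> simp [h1, h2, hδ, hε]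
      _ = _ := by
          rw [swap3]
          exact Finset.sum_congr rfl fun k _ => Finset.sum_congr rfl fun l _ =>
            (Finset.mul_sum _ _ _).symm
  rw [hL, hR]
  refine Finset.sum_le_sum fun k hk => Finset.sum_le_sum fun l hl => ?_
  refine mul_le_mul_of_nonneg_left ?_
    (mul_nonneg (hδ0 k (mem_range.mp hk)) (hε0 l (mem_range.mp hl)))
  -- key counting bound: T k l ≤ N k l
  rcases le_total k l with hkl | hkl
  · -- bound by row sums: T ≤ ∑_{i ≤ k} 1 = N
    have hN : ∑ i ∈ range n, (if i ≤ k then (1:ℝ) else 0) * (if i ≤ l then (1:ℝ) else 0)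
        = ∑ i ∈ range n, (if i ≤ k then (1:ℝ) else 0) := by
      refine Finset.sum_congr rfl fun i _ => ?_
      by_cases h1 : i ≤ k
      · simp [h1, h1.trans hkl]
      · simp [h1]
    rw [hN]
    refine Finset.sum_le_sum fun i hi => ?_
    by_cases h1 : i ≤ k
    · simp only [h1, if_true, one_mul]
      calc ∑ j ∈ range n, (if j ≤ l then (1:ℝ) else 0) * S i j
          ≤ ∑ j ∈ range n, S i j := by
            refine Finset.sum_le_sum fun j _ => ?_
            by_cases h2 : j ≤ l <;> simp [h2, hS0 i j]
        _ ≤ 1 := hrow i (mem_range.mp hi)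
    · simp only [h1, if_false, zero_mul]
      refine le_of_eq ?_
      refine Finset.sum_eq_zero fun j _ => by ring
  · -- bound by column sums
    have hN : ∑ i ∈ range n, (if i ≤ k then (1:ℝ) else 0) * (if i ≤ l then (1:ℝ) else 0)
        = ∑ i ∈ range n, (if i ≤ l then (1:ℝ) else 0) := by
      refine Finset.sum_congr rfl fun i _ => ?_
      by_cases h2 : i ≤ l
      · simp [h2, h2.trans hkl]
      · simp [h2]
    rw [hN, Finset.sum_comm]
    refine Finset.sum_le_sum fun j hj => ?_
    by_cases h2 : j ≤ l
    · simp only [h2, if_true, mul_one]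
      calc ∑ i ∈ range n, (if i ≤ k then (1:ℝ) else 0) * S i j
          ≤ ∑ i ∈ range n, S i j := by
            refine Finset.sum_le_sum fun i _ => ?_
            by_cases h1 : i ≤ k <;> simp [h1, hS0 i j]
        _ ≤ 1 := hcol j (mem_range.mp hj)
    · simp only [h2, if_false, mul_zero]
      refine le_of_eq ?_
      refine Finset.sum_eq_zero fun i _ => by ring

theorem von_neumann_aux {n : ℕ}
    (A B : Matrix (Fin n) (Fin n) ℝ)
    (UA VA UB VB : Matrix (Fin n) (Fin n) ℝ) (σA σB : Fin n → ℝ)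
    (hUA : UAᵀ * UA = 1) (hVA : VAᵀ * VA = 1) (hσA : Antitone σA) (hσA0 : ∀ i, 0 ≤ σA i)
    (hAeq : A = UA * diagonal σA * VAᵀ)
    (hUB : UBᵀ * UB = 1) (hVB : VBᵀ * VB = 1) (hσB : Antitone σB) (hσB0 : ∀ i, 0 ≤ σB i)
    (hBeq : B = UB * diagonal σB * VBᵀ) :
    |(A * B).trace| ≤ ∑ i, σA i * σB i := by
  set P := VAᵀ * UB with hP
  set Q := VBᵀ * UA with hQ
  -- trace formula
  have htr : (A * B).trace = ∑ i, ∑ j, σA i * P i j * σB j * Q j i := by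
    have h1 : A * B = UA * (diagonal σA * P * diagonal σB * VBᵀ) := by
      rw [hAeq, hBeq, hP]; noncomm_ring
    rw [h1, Matrix.trace_mul_comm]
    have h2 : diagonal σA * P * diagonal σB * VBᵀ * UA
        = diagonal σA * P * diagonal σB * Q := by rw [hQ]; noncomm_ring
    rw [h2, Matrix.trace]
    refine Finset.sum_congr rfl fun i _ => ?_
    rw [Matrix.diag_apply, Matrix.mul_apply]
    refine Finset.sum_congr rfl fun j _ => ?_
    rw [Matrix.mul_diagonal, Matrix.diagonal_mul]
  -- orthogonality of P and Q
  have orth : ∀ (X Y : Matrix (Fin n) (Fin n) ℝ), Xᵀ * X = 1 → Yᵀ * Y = 1 →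
      (Xᵀ * Y)ᵀ * (Xᵀ * Y) = 1 := by
    intro X Y hX hY
    have hX' : X * Xᵀ = 1 := mul_eq_one_comm.mp hX
    calc (Xᵀ * Y)ᵀ * (Xᵀ * Y) = Yᵀ * (X * Xᵀ) * Y := by
          rw [Matrix.transpose_mul, Matrix.transpose_transpose]; noncomm_ring
      _ = 1 := by rw [hX', Matrix.mul_one, hY]
  have hPo : Pᵀ * P = 1 := orth VA UB hVA hUB
  have hQo : Qᵀ * Q = 1 := orth VB UA hVB hUA
  have hPo' : P * Pᵀ = 1 := mul_eq_one_comm.mp hPo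
  have hQo' : Q * Qᵀ = 1 := mul_eq_one_comm.mp hQo
  -- row and column sums of squares
  have rowsq : ∀ (X : Matrix (Fin n) (Fin n) ℝ), X * Xᵀ = 1 → ∀ i, ∑ j, (X i j)^2 = 1 := by
    intro X hX i
    have := congrArg (fun M => M i i) hX
    simp only [Matrix.mul_apply, Matrix.transpose_apply, Matrix.one_apply_eq] at this
    rw [← this]
    exact Finset.sum_congr rfl fun j _ => (sq (X i j)) ▸ rfl
  have hProw : ∀ i, ∑ j, (P i j)^2 = 1 := rowsq P hPo'
  have hPcol : ∀ j, ∑ i, (P i j)^2 = 1 := by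
    intro j
    have := rowsq Pᵀ (by rw [Matrix.transpose_transpose]; exact hPo) j
    simpa [Matrix.transpose_apply] using this
  have hQrow : ∀ i, ∑ j, (Q i j)^2 = 1 := rowsq Q hQo'
  have hQcol : ∀ j, ∑ i, (Q i j)^2 = 1 := by
    intro j
    have := rowsq Qᵀ (by rw [Matrix.transpose_transpose]; exact hQo) j
    simpa [Matrix.transpose_apply] using this
  -- the doubly stochastic matrix
  set T : Fin n → Fin n → ℝ := fun i j => ((P i j)^2 + (Q j i)^2) / 2 with hT
  have hT0 : ∀ i j, 0 ≤ T i j := fun i j => by positivity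
  have hTrow : ∀ i, ∑ j, T i j = 1 := by
    intro i
    simp only [hT]
    rw [← Finset.sum_div, Finset.sum_add_distrib, hProw i, hQcol i]
    norm_num
  have hTcol : ∀ j, ∑ i, T i j = 1 := by
    intro j
    simp only [hT]
    rw [← Finset.sum_div, Finset.sum_add_distrib, hPcol j, hQrow j]
    norm_num
  -- bound the trace by matrix of T
  have step1 : |(A * B).trace| ≤ ∑ i, ∑ j, σA i * σB j * T i j := by
    rw [htr]
    calc |∑ i, ∑ j, σA i * P i j * σB j * Q j i|
        ≤ ∑ i, |∑ j, σA i * P i j * σB j * Q j i| := Finset.abs_sum_le_sum_abs _ _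
      _ ≤ ∑ i, ∑ j, |σA i * P i j * σB j * Q j i| :=
          Finset.sum_le_sum fun i _ => Finset.abs_sum_le_sum_abs _ _
      _ ≤ ∑ i, ∑ j, σA i * σB j * T i j := by
          refine Finset.sum_le_sum fun i _ => Finset.sum_le_sum fun j _ => ?_
          have h1 : |σA i * P i j * σB j * Q j i| = σA i * σB j * |P i j * Q j i| := by
            rw [abs_mul, abs_mul, abs_mul, abs_mul, abs_of_nonneg (hσA0 i),
              abs_of_nonneg (hσB0 j)]
            ring
          rw [h1]
          refine mul_le_mul_of_nonneg_left ?_ (mul_nonneg (hσA0 i) (hσB0 j))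
          rw [abs_mul, hT]
          nlinarith [sq_nonneg (|P i j| - |Q j i|), sq_abs (P i j), sq_abs (Q j i),
            abs_nonneg (P i j), abs_nonneg (Q j i)]
  refine step1.trans ?_
  -- transfer to ℕ-indexed sums and apply key_rearrangement
  set a : ℕ → ℝ := fun i => if h : i < n then σA ⟨i, h⟩ else 0 with ha
  set b : ℕ → ℝ := fun i => if h : i < n then σB ⟨i, h⟩ else 0 with hb
  set S : ℕ → ℕ → ℝ := fun i j =>
    if h : i < n ∧ j < n then T ⟨i, h.1⟩ ⟨j, h.2⟩ else 0 with hS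
  have hmono : ∀ (σ : Fin n → ℝ), Antitone σ → (∀ i, 0 ≤ σ i) →
      ∀ k < n, (fun i => if h : i < n then σ ⟨i, h⟩ else 0) (k+1)
        ≤ (fun i => if h : i < n then σ ⟨i, h⟩ else 0) k := by
    intro σ hm h0 k hk
    simp only [dif_pos hk]
    by_cases h1 : k + 1 < n
    · rw [dif_pos h1]
      exact hm (by simp [Fin.mk_le_mk])
    · rw [dif_neg h1]
      exact h0 _
  have kr := key_rearrangement n a b S
    (hmono σA hσA hσA0) (by simp [ha]) (hmono σB hσB hσB0) (by simp [hb])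
    (fun i j => by by_cases h : i < n ∧ j < n <;> simp [hS, h, hT0])
    (fun i hi => by
      rw [← Fin.sum_univ_eq_sum_range (fun j => S i j) n]
      simp only [hS, hi, true_and]
      calc ∑ j : Fin n, (if h : (j:ℕ) < n then T ⟨i, hi⟩ ⟨j, h⟩ else 0)
          = ∑ j : Fin n, T ⟨i, hi⟩ j := by
            refine Finset.sum_congr rfl fun j _ => ?_
            rw [dif_pos j.isLt]
        _ ≤ 1 := le_of_eq (hTrow _))
    (fun j hj => by
      rw [← Fin.sum_univ_eq_sum_range (fun i => S i j) n]
      calc ∑ i : Fin n, S i j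
          = ∑ i : Fin n, T i ⟨j, hj⟩ := by
            refine Finset.sum_congr rfl fun i _ => ?_
            simp only [hS, i.isLt, hj, and_true, true_and, dif_pos]
        _ ≤ 1 := le_of_eq (hTcol _))
  -- identify the two sides
  have hLHS : ∑ i, ∑ j, σA i * σB j * T i j
      = ∑ i ∈ range n, ∑ j ∈ range n, a i * b j * S i j := by
    rw [← Fin.sum_univ_eq_sum_range (fun i => ∑ j ∈ range n, a i * b j * S i j) n]
    refine Finset.sum_congr rfl fun i _ => ?_
    rw [← Fin.sum_univ_eq_sum_range (fun j => a i * b j * S i j) n]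
    refine Finset.sum_congr rfl fun j _ => ?_
    simp only [ha, hb, hS, i.isLt, j.isLt, and_true, true_and, dif_pos]
  have hRHS : ∑ i ∈ range n, a i * b i = ∑ i, σA i * σB i := by
    rw [← Fin.sum_univ_eq_sum_range (fun i => a i * b i) n]
    refine Finset.sum_congr rfl fun i _ => ?_
    simp only [ha, hb, i.isLt, dif_pos]
  rw [hLHS, ← hRHS]
  exact kr

end Aux

/-- von Neumann trace inequality: `|Tr(AB)| ≤ ∑ i σ_i(A) σ_i(B)` where the singular values
of `A` and `B` are listed in decreasing order. -/
theorem von_neumann_trace_inequality {n : ℕ}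
    (A B : Matrix (Fin n) (Fin n) ℝ)
    (UA VA UB VB : Matrix (Fin n) (Fin n) ℝ) (σA σB : Fin n → ℝ)
    (hA : IsSVD A UA σA VA) (hB : IsSVD B UB σB VB) :
    |(A * B).trace| ≤ ∑ i, σA i * σB i := by
  obtain ⟨hUA, hVA, hσA, hσA0, hAeq⟩ := hA
  obtain ⟨hUB, hVB, hσB, hσB0, hBeq⟩ := hB
  exact von_neumann_aux A B UA VA UB VB σA σB hUA hVA hσA hσA0 hAeq hUB hVB hσB hσB0 hBeq
end

section
/- Let Θ be a threshold function, λ ≥ 0, and let P be a penalty satisfying condition (constrP) for Θ. Then for every t ∈ ℝ at which Θ(·;λ) is continuous, θ̂ = Θ(t;λ) is the unique global minimizer over θ ∈ ℝ of the function θ ↦ (t−θ)²/2 + P(θ;λ). -/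
/-- A threshold function `Θ(t; λ)`, defined for all `t ∈ ℝ` and `λ ≥ 0`:
(1) odd in `t`; (2) nondecreasing in `t`; (3) tends to `∞` as `t → ∞`;
(4) `0 ≤ Θ(t;λ) ≤ t` for `t ≥ 0`. -/
def IsThresholdFunction (Θ : ℝ → ℝ → ℝ) : Prop :=
  ∀ lam : ℝ, 0 ≤ lam →
    (∀ t : ℝ, Θ (-t) lam = -Θ t lam) ∧
    (Monotone fun t => Θ t lam) ∧
    Filter.Tendsto (fun t => Θ t lam) Filter.atTop Filter.atTop ∧
    (∀ t : ℝ, 0 ≤ t → 0 ≤ Θ t lam ∧ Θ t lam ≤ t)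

/-- Let `Θ` be a threshold function, `λ ≥ 0`, and let `P` be a penalty satisfying condition
(constrP) for `Θ`, i.e. `P(θ) − P(0) = ∫₀^{|θ|} (sup{s : Θ(s;λ) ≤ u} − u) du + q(θ)`
with `q ≥ 0` and `q(Θ(t;λ)) = 0` for all `t`. Then for every `t` at which `Θ(·;λ)` is
continuous, `Θ(t;λ)` is the unique global minimizer of `θ ↦ (t−θ)²/2 + P(θ)`. -/
theorem scalar_thresholding_unique_minimizer
    (Θ : ℝ → ℝ → ℝ) (hΘ : IsThresholdFunction Θ) (lam : ℝ) (hlam : 0 ≤ lam)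
    (P q : ℝ → ℝ)
    (hq : ∀ θ : ℝ, 0 ≤ q θ) (hqΘ : ∀ t : ℝ, q (Θ t lam) = 0)
    (hP : ∀ θ : ℝ,
      P θ - P 0 = (∫ u in (0:ℝ)..|θ|, (sSup {s : ℝ | Θ s lam ≤ u} - u)) + q θ)
    (t : ℝ) (hcont : ContinuousAt (fun s => Θ s lam) t) :
    ∀ θ : ℝ, θ ≠ Θ t lam →
      (t - Θ t lam) ^ 2 / 2 + P (Θ t lam) < (t - θ) ^ 2 / 2 + P θ := by
  obtain ⟨hodd, hmono, htop, hbnd⟩ := hΘ lam hlam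
  -- nonemptiness and boundedness of the sublevel sets
  have hne : ∀ u : ℝ, {s : ℝ | Θ s lam ≤ u}.Nonempty := by
    intro u
    obtain ⟨s, hs⟩ := (htop.eventually_ge_atTop (-u)).exists
    refine ⟨-s, ?_⟩
    simp only [Set.mem_setOf_eq, hodd]
    linarith
  have hbdd : ∀ u : ℝ, BddAbove {s : ℝ | Θ s lam ≤ u} := by
    intro u
    obtain ⟨s, hs⟩ := (htop.eventually_ge_atTop (u + 1)).exists
    refine ⟨s, fun x hx => ?_⟩
    by_contra h
    push_neg at h
    have h2 := hmono h.le
    simp only [Set.mem_setOf_eq] at hx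
    simp only at h2
    linarith
  have hGmono : Monotone (fun u : ℝ => sSup {s : ℝ | Θ s lam ≤ u}) := by
    intro u v huv
    exact csSup_le_csSup (hbdd v) (hne u) (fun x hx => le_trans hx huv)
  -- key inverse-type inequalities, using continuity
  have L1 : ∀ t' u : ℝ, ContinuousAt (fun s => Θ s lam) t' → Θ t' lam < u →
      t' < sSup {s : ℝ | Θ s lam ≤ u} := by
    intro t' u hc hlt
    obtain ⟨δ, hδ, hδ2⟩ := Metric.continuousAt_iff.mp hc (u - Θ t' lam) (by linarith)
    have hd : dist (t' + δ / 2) t' < δ := by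
      rw [Real.dist_eq]
      rw [show t' + δ / 2 - t' = δ / 2 by ring, abs_of_nonneg (by linarith)]
      linarith
    have h1 : Θ (t' + δ / 2) lam ≤ u := by
      have h2 := hδ2 hd
      rw [Real.dist_eq] at h2
      have h3 := (abs_lt.mp h2).2
      linarith
    have h4 : t' + δ / 2 ≤ sSup {s : ℝ | Θ s lam ≤ u} := le_csSup (hbdd u) h1
    linarith
  have L2 : ∀ t' u : ℝ, ContinuousAt (fun s => Θ s lam) t' → u < Θ t' lam →
      sSup {s : ℝ | Θ s lam ≤ u} < t' := by
    intro t' u hc hlt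
    obtain ⟨δ, hδ, hδ2⟩ := Metric.continuousAt_iff.mp hc (Θ t' lam - u) (by linarith)
    have hd : dist (t' - δ / 2) t' < δ := by
      rw [Real.dist_eq]
      rw [show t' - δ / 2 - t' = -(δ / 2) by ring, abs_neg, abs_of_nonneg (by linarith)]
      linarith
    have h1 : u < Θ (t' - δ / 2) lam := by
      have h2 := hδ2 hd
      rw [Real.dist_eq] at h2
      have h3 := (abs_lt.mp h2).1
      linarith
    have h4 : sSup {s : ℝ | Θ s lam ≤ u} ≤ t' - δ / 2 := by
      refine csSup_le (hne u) (fun x hx => ?_)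
      by_contra h
      push_neg at h
      have h5 := hmono h.le
      simp only at h5
      simp only [Set.mem_setOf_eq] at hx
      linarith
    linarith
  -- continuity at -t
  have hcont' : ContinuousAt (fun s => Θ s lam) (-t) := by
    have heq : (fun s : ℝ => Θ s lam) = fun s : ℝ => -Θ (-s) lam := by
      funext s
      rw [hodd]
      ring
    rw [heq]
    have h0 : ContinuousAt (fun s => Θ s lam) (- -t) := by
      rw [neg_neg]; exact hcont
    exact (ContinuousAt.comp h0 continuous_neg.continuousAt).neg
  -- integrability facts
  have hGanti : Antitone (fun x : ℝ => sSup {s : ℝ | Θ s lam ≤ -x}) :=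
    fun x y hxy => hGmono (neg_le_neg hxy)
  have hintG : ∀ c d : ℝ,
      IntervalIntegrable (fun u : ℝ => sSup {s : ℝ | Θ s lam ≤ u}) MeasureTheory.volume c d :=
    fun c d => (hGmono.monotoneOn _).intervalIntegrable
  have hintGn : ∀ c d : ℝ,
      IntervalIntegrable (fun x : ℝ => sSup {s : ℝ | Θ s lam ≤ -x}) MeasureTheory.volume c d :=
    fun c d => (hGanti.antitoneOn _).intervalIntegrable
  have hintg : ∀ c d : ℝ,
      IntervalIntegrable (fun u : ℝ => sSup {s : ℝ | Θ s lam ≤ u} - u) MeasureTheory.volume c d :=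
    fun c d => (hintG c d).sub (continuous_id.intervalIntegrable c d)
  have hintgn : ∀ c d : ℝ,
      IntervalIntegrable (fun x : ℝ => sSup {s : ℝ | Θ s lam ≤ -x} - -x) MeasureTheory.volume c d :=
    fun c d => (hintGn c d).sub (continuous_neg.intervalIntegrable c d)
  have hintq : ∀ c d : ℝ,
      IntervalIntegrable (fun s : ℝ => s - t) MeasureTheory.volume c d :=
    fun c d => (continuous_id.sub continuous_const).intervalIntegrable c d
  -- flip lemma
  have hflip : ∀ c d : ℝ,
      (∫ u in (-c)..(-d), (sSup {s : ℝ | Θ s lam ≤ u} - u)) =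
        -∫ x in c..d, (sSup {s : ℝ | Θ s lam ≤ -x} - -x) := by
    intro c d
    have h1 := intervalIntegral.integral_comp_neg (a := d) (b := c)
      (fun u : ℝ => sSup {s : ℝ | Θ s lam ≤ u} - u)
    rw [← h1, intervalIntegral.integral_symm]
  -- quadratic as integral
  have hquad : ∀ c d : ℝ, (∫ s in c..d, (s - t)) = (t - d) ^ 2 / 2 - (t - c) ^ 2 / 2 := by
    intro c d
    have h1 : (∫ s in c..d, (s - t)) = (∫ s in c..d, (s : ℝ)) - ∫ _s in c..d, (t : ℝ) :=
      intervalIntegral.integral_sub (f := fun x : ℝ => x) (g := fun _ : ℝ => t)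
        (continuous_id.intervalIntegrable c d) (continuous_const.intervalIntegrable c d)
    rw [h1, _root_.integral_id, intervalIntegral.integral_const]
    simp only [smul_eq_mul]
    ring
  -- combination identities
  have idA : ∀ c d : ℝ,
      ((∫ s in c..d, (s - t)) + ∫ u in c..d, (sSup {s : ℝ | Θ s lam ≤ u} - u)) =
        ∫ u in c..d, (sSup {s : ℝ | Θ s lam ≤ u} - t) := by
    intro c d
    rw [← intervalIntegral.integral_add (hintq c d) (hintg c d)]
    exact intervalIntegral.integral_congr (fun u _ => by ring)
  have idD : ∀ c d : ℝ,
      ((∫ s in c..d, (s - t)) - ∫ s in c..d, (sSup {x : ℝ | Θ x lam ≤ -s} - -s)) =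
        ∫ s in c..d, (-t - sSup {x : ℝ | Θ x lam ≤ -s}) := by
    intro c d
    rw [← intervalIntegral.integral_sub (hintq c d) (hintgn c d)]
    exact intervalIntegral.integral_congr (fun u _ => by ring)
  have idnegA : ∀ c d : ℝ,
      (∫ u in c..d, (t - sSup {s : ℝ | Θ s lam ≤ u})) =
        -∫ u in c..d, (sSup {s : ℝ | Θ s lam ≤ u} - t) := by
    intro c d
    rw [← intervalIntegral.integral_neg]
    exact intervalIntegral.integral_congr (fun u _ => by ring)
  have idnegD : ∀ c d : ℝ,
      (∫ s in c..d, (t + sSup {x : ℝ | Θ x lam ≤ -s})) =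
        -∫ s in c..d, (-t - sSup {x : ℝ | Θ x lam ≤ -s}) := by
    intro c d
    rw [← intervalIntegral.integral_neg]
    exact intervalIntegral.integral_congr (fun u _ => by ring)
  set a := Θ t lam with ha
  -- positivity lemmas
  have posA : ∀ c d : ℝ, c < d → a ≤ c →
      0 < ∫ u in c..d, (sSup {s : ℝ | Θ s lam ≤ u} - t) := by
    intro c d hcd hac
    refine intervalIntegral.intervalIntegral_pos_of_pos_on
      ((hintG c d).sub (continuous_const.intervalIntegrable c d)) (fun u hu => ?_) hcd
    have : a < u := lt_of_le_of_lt hac hu.1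
    have := L1 t u hcont (by rw [← ha]; exact this)
    linarith
  have posB : ∀ c d : ℝ, c < d → d ≤ a →
      0 < ∫ u in c..d, (t - sSup {s : ℝ | Θ s lam ≤ u}) := by
    intro c d hcd hda
    refine intervalIntegral.intervalIntegral_pos_of_pos_on
      ((continuous_const.intervalIntegrable c d).sub (hintG c d)) (fun u hu => ?_) hcd
    have : u < a := lt_of_lt_of_le hu.2 hda
    have := L2 t u hcont (by rw [← ha]; exact this)
    linarith
  have posC : ∀ c d : ℝ, c < d → d ≤ a →
      0 < ∫ s in c..d, (t + sSup {x : ℝ | Θ x lam ≤ -s}) := by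
    intro c d hcd hda
    refine intervalIntegral.intervalIntegral_pos_of_pos_on
      ((continuous_const.intervalIntegrable c d).add (hintGn c d)) (fun s hs => ?_) hcd
    have h1 : Θ (-t) lam < -s := by
      rw [hodd, ← ha]
      have : s < a := lt_of_lt_of_le hs.2 hda
      linarith
    have := L1 (-t) (-s) hcont' h1
    linarith
  have posD : ∀ c d : ℝ, c < d → a ≤ c →
      0 < ∫ s in c..d, (-t - sSup {x : ℝ | Θ x lam ≤ -s}) := by
    intro c d hcd hac
    refine intervalIntegral.intervalIntegral_pos_of_pos_on
      ((continuous_const.intervalIntegrable c d).sub (hintGn c d)) (fun s hs => ?_) hcd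
    have h1 : -s < Θ (-t) lam := by
      rw [hodd, ← ha]
      have : a < s := lt_of_le_of_lt hac hs.1
      linarith
    have := L2 (-t) (-s) hcont' h1
    linarith
  intro θ hθ
  -- difference of penalties
  have hPd : P θ - P a = (∫ u in |a|..|θ|, (sSup {s : ℝ | Θ s lam ≤ u} - u)) + q θ := by
    have h1 := hP θ
    have h2 := hP a
    rw [ha, hqΘ t, ← ha] at h2
    have h3 : (∫ u in (0:ℝ)..|θ|, (sSup {s : ℝ | Θ s lam ≤ u} - u)) -
        (∫ u in (0:ℝ)..|a|, (sSup {s : ℝ | Θ s lam ≤ u} - u)) =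
        ∫ u in |a|..|θ|, (sSup {s : ℝ | Θ s lam ≤ u} - u) :=
      intervalIntegral.integral_interval_sub_left (hintg _ _) (hintg _ _)
    linarith
  have hq' := hq θ
  -- suffices: strict positivity of the "smooth" part
  have key : 0 < ((t - θ) ^ 2 / 2 - (t - a) ^ 2 / 2) +
      ∫ u in |a|..|θ|, (sSup {s : ℝ | Θ s lam ≤ u} - u) := by
    rw [← hquad a θ]
    rcases lt_or_gt_of_ne hθ with hlt | hgt
    · -- θ < a
      rcases lt_or_ge θ 0 with hθ0 | hθ0
      · rcases le_or_gt a 0 with ha0 | ha0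
        · -- θ < a ≤ 0
          rw [abs_of_nonpos ha0, abs_of_nonpos hθ0.le, hflip a θ]
          have h1 := idD θ a
          have h2 := idnegD θ a
          have h3 := posC θ a hlt le_rfl
          have h4 := intervalIntegral.integral_symm (a := θ) (b := a)
            (f := fun s : ℝ => s - t) (μ := MeasureTheory.volume)
          have h5 := intervalIntegral.integral_symm (a := θ) (b := a)
            (f := fun s : ℝ => sSup {x : ℝ | Θ x lam ≤ -s} - -s) (μ := MeasureTheory.volume)
          linarith
        ·
          rw [abs_of_nonneg ha0.le, abs_of_nonpos hθ0.le]
          have hθ0' : θ < 0 := hθ0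
          -- split at 0
          have hs1 : (∫ s in a..(0:ℝ), (s - t)) + (∫ s in (0:ℝ)..θ, (s - t)) =
              ∫ s in a..θ, (s - t) :=
            intervalIntegral.integral_add_adjacent_intervals (hintq _ _) (hintq _ _)
          have hs2 : (∫ u in a..(0:ℝ), (sSup {s : ℝ | Θ s lam ≤ u} - u)) +
              (∫ u in (0:ℝ)..(-θ), (sSup {s : ℝ | Θ s lam ≤ u} - u)) =
              ∫ u in a..(-θ), (sSup {s : ℝ | Θ s lam ≤ u} - u) :=
            intervalIntegral.integral_add_adjacent_intervals (hintg _ _) (hintg _ _)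
          -- group 1 : ∫_0^a (t - G)
          have g1a := idA 0 a
          have g1b := idnegA 0 a
          have g1c := posB 0 a ha0 le_rfl
          have h4 := intervalIntegral.integral_symm (a := (0:ℝ)) (b := a)
            (f := fun s : ℝ => s - t) (μ := MeasureTheory.volume)
          have h5 := intervalIntegral.integral_symm (a := (0:ℝ)) (b := a)
            (f := fun u : ℝ => sSup {s : ℝ | Θ s lam ≤ u} - u) (μ := MeasureTheory.volume)
          -- group 2
          have hfl := hflip 0 θ
          rw [neg_zero] at hfl
          have g2a := idD θ 0
          have g2b := idnegD θ 0
          have g2c := posC θ 0 hθ0' ha0.le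
          have h6 := intervalIntegral.integral_symm (a := θ) (b := (0:ℝ))
            (f := fun s : ℝ => s - t) (μ := MeasureTheory.volume)
          have h7 := intervalIntegral.integral_symm (a := θ) (b := (0:ℝ))
            (f := fun s : ℝ => sSup {x : ℝ | Θ x lam ≤ -s} - -s) (μ := MeasureTheory.volume)
          linarith
      · -- 0 ≤ θ < a
        rw [abs_of_nonneg (le_trans hθ0 hlt.le), abs_of_nonneg hθ0]
        have h1 := idA θ a
        have h2 := idnegA θ a
        have h3 := posB θ a hlt le_rfl
        have h4 := intervalIntegral.integral_symm (a := θ) (b := a)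
          (f := fun s : ℝ => s - t) (μ := MeasureTheory.volume)
        have h5 := intervalIntegral.integral_symm (a := θ) (b := a)
          (f := fun u : ℝ => sSup {s : ℝ | Θ s lam ≤ u} - u) (μ := MeasureTheory.volume)
        linarith
    · -- a < θ
      rcases le_or_gt 0 a with ha0 | ha0
      · -- 0 ≤ a < θ
        rw [abs_of_nonneg ha0, abs_of_nonneg (le_trans ha0 hgt.le)]
        have h1 := idA a θ
        have h2 := posA a θ hgt le_rfl
        linarith
      · rcases le_or_gt θ 0 with hθ0 | hθ0
        · -- a < θ ≤ 0
          rw [abs_of_nonpos ha0.le, abs_of_nonpos hθ0, hflip a θ]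
          have h1 := idD a θ
          have h2 := posD a θ hgt le_rfl
          linarith
        · -- a < 0 < θ
          rw [abs_of_nonpos ha0.le, abs_of_nonneg hθ0.le]
          have hs1 : (∫ s in a..(0:ℝ), (s - t)) + (∫ s in (0:ℝ)..θ, (s - t)) =
              ∫ s in a..θ, (s - t) :=
            intervalIntegral.integral_add_adjacent_intervals (hintq _ _) (hintq _ _)
          have hs2 : (∫ u in (-a)..(0:ℝ), (sSup {s : ℝ | Θ s lam ≤ u} - u)) +
              (∫ u in (0:ℝ)..θ, (sSup {s : ℝ | Θ s lam ≤ u} - u)) =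
              ∫ u in (-a)..θ, (sSup {s : ℝ | Θ s lam ≤ u} - u) :=
            intervalIntegral.integral_add_adjacent_intervals (hintg _ _) (hintg _ _)
          have hfl := hflip a 0
          rw [neg_zero] at hfl
          have g1a := idD a 0
          have g1b := posD a 0 ha0 le_rfl
          have g2a := idA 0 θ
          have g2b := posA 0 θ hθ0 ha0.le
          linarith
  linarith
end

section
/- Let Θ be a threshold function, λ ≥ 0, and P a penalty satisfying condition (constrP) for Θ. Let Y ∈ ℝ^{n×m} and suppose Θ(·;λ) is continuous at every singular value of Y. Then the matrix thresholding B̂ = Θ^σ(Y;λ) is a global minimizer over B ∈ ℝ^{n×m} of F(B) = ‖Y−B‖_F²/2 + Σ_i P(σ_i(B);λ), where σ_i(B) are the singular values of B. -/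
open Matrix

/-- Squared Frobenius norm of a real matrix. -/
def frobSq {n m : ℕ} (A : Matrix (Fin n) (Fin m) ℝ) : ℝ := ∑ i, ∑ j, A i j ^ 2

section Aux

open Finset MeasureTheory intervalIntegral

/-- Scalar minimization: the threshold value minimizes `θ ↦ (t-θ)²/2 + P(θ)` over `θ ≥ 0`. -/
lemma scalar_min_aux (Θ : ℝ → ℝ → ℝ) (lam : ℝ)
    (hmono : Monotone fun t => Θ t lam)
    (htop : Filter.Tendsto (fun t => Θ t lam) Filter.atTop Filter.atTop)
    (hbound : ∀ t : ℝ, 0 ≤ t → 0 ≤ Θ t lam ∧ Θ t lam ≤ t)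
    (P q : ℝ → ℝ)
    (hq : ∀ θ : ℝ, 0 ≤ q θ) (hqΘ : ∀ t : ℝ, q (Θ t lam) = 0)
    (hP : ∀ θ : ℝ,
      P θ - P 0 = (∫ u in (0:ℝ)..|θ|, (sSup {s : ℝ | Θ s lam ≤ u} - u)) + q θ)
    (t θ : ℝ) (ht : 0 ≤ t) (hθ : 0 ≤ θ) :
    (t - Θ t lam) ^ 2 / 2 + P (Θ t lam) ≤ (t - θ) ^ 2 / 2 + P θ := by
  set g : ℝ → ℝ := fun u => sSup {s : ℝ | Θ s lam ≤ u} with hg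
  set T : ℝ := Θ t lam with hTdef
  have hT0 : 0 ≤ T := (hbound t ht).1
  have hbdd : ∀ u : ℝ, BddAbove {s : ℝ | Θ s lam ≤ u} := by
    intro u
    obtain ⟨s₀, hs₀⟩ := (htop.eventually (Filter.eventually_ge_atTop (u + 1))).exists_forall_of_atTop
    refine ⟨s₀, fun s hs => ?_⟩
    by_contra hc
    push_neg at hc
    have := hs₀ s hc.le
    simp only [Set.mem_setOf_eq] at hs
    linarith
  have hne : ∀ u : ℝ, 0 ≤ u → (0 : ℝ) ∈ {s : ℝ | Θ s lam ≤ u} := by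
    intro u hu
    have h0 := hbound 0 le_rfl
    simpa only [Set.mem_setOf_eq] using h0.2.trans hu
  have gmono : MonotoneOn g (Set.Ici (0:ℝ)) := by
    intro u hu u' hu' huu'
    exact csSup_le_csSup (hbdd u') ⟨0, hne u hu⟩ (fun s hs => le_trans hs huu')
  have g_ge : ∀ u : ℝ, T ≤ u → t ≤ g u := fun u hu =>
    le_csSup (hbdd u) (by simpa only [Set.mem_setOf_eq, ← hTdef] using hu)
  have g_le : ∀ u : ℝ, 0 ≤ u → u < T → g u ≤ t := by
    intro u hu huT
    refine csSup_le ⟨0, hne u hu⟩ (fun s hs => ?_)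
    by_contra hc
    push_neg at hc
    have := hmono hc.le
    simp only [Set.mem_setOf_eq] at hs
    simp only at this
    linarith
  have hint : ∀ a b : ℝ, 0 ≤ a → 0 ≤ b →
      IntervalIntegrable (fun u => g u - u) volume a b := by
    intro a b ha hb
    have h1 : IntervalIntegrable g volume a b :=
      MonotoneOn.intervalIntegrable (gmono.mono (fun x hx => le_trans (le_inf ha hb) hx.1))
    exact h1.sub (ContinuousOn.intervalIntegrable (continuous_id.continuousOn))
  have hiRW : ∀ c : ℝ, (∫ u in (0:ℝ)..c, (sSup {s : ℝ | Θ s lam ≤ u} - u))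
      = ∫ u in (0:ℝ)..c, (g u - u) := by intro c; simp only [hg]
  have hPT : P T = P 0 + (∫ u in (0:ℝ)..T, (g u - u)) := by
    have h := hP T
    rw [abs_of_nonneg hT0] at h
    have hqT : q T = 0 := by rw [hTdef]; exact hqΘ t
    rw [hqT, add_zero, hiRW T] at h
    linarith
  have hPθ : P θ = P 0 + (∫ u in (0:ℝ)..θ, (g u - u)) + q θ := by
    have h := hP θ
    rw [abs_of_nonneg hθ, hiRW θ] at h
    linarith
  rw [hPT, hPθ]
  have hsub : (∫ u in (0:ℝ)..θ, (g u - u)) - (∫ u in (0:ℝ)..T, (g u - u))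
      = ∫ u in T..θ, (g u - u) :=
    integral_interval_sub_left (hint 0 θ le_rfl hθ) (hint 0 T le_rfl hT0)
  have hpoly : (∫ u in T..θ, (u - t)) = (t - θ) ^ 2 / 2 - (t - T) ^ 2 / 2 := by
    have h1 : (∫ u in T..θ, (u - t)) = (∫ u in T..θ, u) - (∫ u in T..θ, (t:ℝ)) :=
      integral_sub (intervalIntegrable_id) (intervalIntegrable_const)
    rw [h1, integral_id, intervalIntegral.integral_const]
    simp only [smul_eq_mul]
    ring
  have hkey : 0 ≤ ∫ u in T..θ, (g u - t) := by
    rcases le_total T θ with hc | hc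
    · refine integral_nonneg hc (fun u hu => ?_)
      have := g_ge u hu.1
      linarith
    · rw [integral_symm]
      have hptw : ∀ u : ℝ, g u - t = -(t - g u) := fun u => by ring
      simp only [hptw]
      rw [intervalIntegral.integral_neg, neg_neg]
      refine integral_nonneg_of_ae_restrict hc ?_
      have hnull : (volume : Measure ℝ) {u : ℝ | ¬ (u ∈ Set.Icc θ T → 0 ≤ t - g u)} = 0 := by
        refine measure_mono_null (fun u hu => ?_) (Real.volume_singleton (a := T))
        simp only [Set.mem_setOf_eq, not_forall] at hu
        obtain ⟨huIcc, hlt⟩ := hu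
        push_neg at hlt
        by_contra hne'
        have huT : u < T := lt_of_le_of_ne huIcc.2 hne'
        have := g_le u (le_trans hθ huIcc.1) huT
        linarith
      rw [Filter.EventuallyLE, ae_restrict_iff' measurableSet_Icc]
      exact (MeasureTheory.ae_iff).mpr hnull
  have hsplit : (∫ u in T..θ, (g u - u)) + (∫ u in T..θ, (u - t)) = ∫ u in T..θ, (g u - t) := by
    rw [← integral_add (hint T θ hT0 hθ)
      ((intervalIntegrable_id).sub (intervalIntegrable_const))]
    congr 1; ext u; ring
  have hqθ := hq θ
  nlinarith [hkey, hsub, hpoly, hsplit]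

lemma sum4_swap_aux {M : Type*} [AddCommMonoid M] (s : Finset ℕ) (F : ℕ → ℕ → ℕ → ℕ → M) :
    ∑ i ∈ s, ∑ j ∈ s, ∑ p ∈ s, ∑ q ∈ s, F i j p q
      = ∑ p ∈ s, ∑ q ∈ s, ∑ i ∈ s, ∑ j ∈ s, F i j p q := by
  calc ∑ i ∈ s, ∑ j ∈ s, ∑ p ∈ s, ∑ q ∈ s, F i j p q
      = ∑ i ∈ s, ∑ p ∈ s, ∑ j ∈ s, ∑ q ∈ s, F i j p q :=
        Finset.sum_congr rfl fun i _ => Finset.sum_comm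
    _ = ∑ p ∈ s, ∑ i ∈ s, ∑ j ∈ s, ∑ q ∈ s, F i j p q := Finset.sum_comm
    _ = ∑ p ∈ s, ∑ i ∈ s, ∑ q ∈ s, ∑ j ∈ s, F i j p q :=
        Finset.sum_congr rfl fun p _ => Finset.sum_congr rfl fun i _ => Finset.sum_comm
    _ = ∑ p ∈ s, ∑ q ∈ s, ∑ i ∈ s, ∑ j ∈ s, F i j p q :=
        Finset.sum_congr rfl fun p _ => Finset.sum_comm

lemma sum3_swap_aux {M : Type*} [AddCommMonoid M] (s : Finset ℕ) (F : ℕ → ℕ → ℕ → M) :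
    ∑ i ∈ s, ∑ p ∈ s, ∑ q ∈ s, F i p q = ∑ p ∈ s, ∑ q ∈ s, ∑ i ∈ s, F i p q := by
  calc ∑ i ∈ s, ∑ p ∈ s, ∑ q ∈ s, F i p q
      = ∑ p ∈ s, ∑ i ∈ s, ∑ q ∈ s, F i p q := Finset.sum_comm
    _ = ∑ p ∈ s, ∑ q ∈ s, ∑ i ∈ s, F i p q :=
        Finset.sum_congr rfl fun p _ => Finset.sum_comm

/-- A doubly substochastic bilinear bound (discrete von Neumann-type inequality). -/
lemma substoch_nat (k : ℕ) (a b : ℕ → ℝ) (D : ℕ → ℕ → ℝ)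
    (ha : Antitone a) (hb : Antitone b) (ha0 : ∀ i, 0 ≤ a i) (hb0 : ∀ i, 0 ≤ b i)
    (hak : a k = 0) (hbk : b k = 0)
    (hD0 : ∀ i j, 0 ≤ D i j)
    (hrow : ∀ i, ∑ j ∈ range k, D i j ≤ 1)
    (hcol : ∀ j, ∑ i ∈ range k, D i j ≤ 1) :
    ∑ i ∈ range k, ∑ j ∈ range k, a i * b j * D i j ≤ ∑ i ∈ range k, a i * b i := by
  set α : ℕ → ℝ := fun p => a p - a (p + 1) with hα
  set β : ℕ → ℝ := fun q => b q - b (q + 1) with hβ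
  have hα0 : ∀ p, 0 ≤ α p := fun p => sub_nonneg.mpr (ha (Nat.le_succ p))
  have hβ0 : ∀ q, 0 ≤ β q := fun q => sub_nonneg.mpr (hb (Nat.le_succ q))
  have hrep : ∀ (c : ℕ → ℝ) (γ : ℕ → ℝ), γ = (fun p => c p - c (p+1)) → c k = 0 → ∀ i, i < k →
      c i = ∑ p ∈ range k, γ p * (if i ≤ p then 1 else 0) := by
    intro c γ hγ hck i hi
    have h1 : ∑ p ∈ range k, γ p * (if i ≤ p then 1 else 0)
        = ∑ p ∈ Finset.Ico i k, γ p := by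
      rw [show ∑ p ∈ Finset.Ico i k, γ p = ∑ p ∈ (range k).filter (fun p => i ≤ p), γ p by
        congr 1; ext p; simp [Finset.mem_Ico, Finset.mem_filter, Finset.mem_range]; omega]
      rw [Finset.sum_filter]
      congr 1; ext p
      by_cases h : i ≤ p <;> simp [h]
    rw [h1, Finset.sum_Ico_eq_sum_range, hγ]
    have h2 : ∑ p ∈ range (k - i), (c (i + p) - c (i + p + 1))
        = c i - c (i + (k - i)) := by
      have := Finset.sum_range_sub' (fun p => c (i + p)) (k - i)
      simpa [add_assoc] using this
    rw [h2, show i + (k - i) = k by omega, hck, sub_zero]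
  have hind : ∀ p q : ℕ, p < k → q < k →
      ∑ i ∈ range k, (if i ≤ p then (1:ℝ) else 0) * (if i ≤ q then 1 else 0)
        = (min p q : ℝ) + 1 := by
    intro p q hp hq
    have h1 : ∀ i : ℕ, (if i ≤ p then (1:ℝ) else 0) * (if i ≤ q then 1 else 0)
        = if i ≤ min p q then 1 else 0 := by
      intro i
      by_cases h1 : i ≤ p <;> by_cases h2 : i ≤ q <;> simp [h1, h2, Nat.le_min]
    simp only [h1, Finset.sum_boole]
    rw [show (range k).filter (fun i => i ≤ min p q) = range (min p q + 1) by
      ext i; simp [Finset.mem_filter, Finset.mem_range]; omega]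
    simp [Finset.card_range]
  have hcnt : ∀ p : ℕ, p < k → ∑ i ∈ range k, (if i ≤ p then (1:ℝ) else 0) = (p : ℝ) + 1 := by
    intro p hp
    rw [Finset.sum_boole]
    rw [show (range k).filter (fun i => i ≤ p) = range (p + 1) by
      ext i; simp [Finset.mem_filter, Finset.mem_range]; omega]
    simp [Finset.card_range]
  have hS : ∀ p q : ℕ, p < k → q < k →
      ∑ i ∈ range k, ∑ j ∈ range k,
        (if i ≤ p then (1:ℝ) else 0) * (if j ≤ q then 1 else 0) * D i j
      ≤ (min p q : ℝ) + 1 := by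
    intro p q hp hq
    have hrowB : ∑ i ∈ range k, ∑ j ∈ range k,
        (if i ≤ p then (1:ℝ) else 0) * (if j ≤ q then 1 else 0) * D i j ≤ (p:ℝ) + 1 := by
      rw [← hcnt p hp]
      refine Finset.sum_le_sum (fun i _ => ?_)
      by_cases h : i ≤ p
      · simp only [h, if_true, one_mul]
        calc ∑ j ∈ range k, (if j ≤ q then (1:ℝ) else 0) * D i j
            ≤ ∑ j ∈ range k, D i j := by
              refine Finset.sum_le_sum (fun j _ => ?_)
              by_cases h2 : j ≤ q <;> simp [h2, hD0 i j]
          _ ≤ 1 := hrow i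
      · simp [h]
    have hcolB : ∑ i ∈ range k, ∑ j ∈ range k,
        (if i ≤ p then (1:ℝ) else 0) * (if j ≤ q then 1 else 0) * D i j ≤ (q:ℝ) + 1 := by
      rw [Finset.sum_comm]
      rw [← hcnt q hq]
      refine Finset.sum_le_sum (fun j _ => ?_)
      by_cases h : j ≤ q
      · simp only [h, if_true]
        calc ∑ i ∈ range k, (if i ≤ p then (1:ℝ) else 0) * 1 * D i j
            ≤ ∑ i ∈ range k, D i j := by
              refine Finset.sum_le_sum (fun i _ => ?_)
              by_cases h2 : i ≤ p <;> simp [h2, hD0 i j]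
          _ ≤ 1 := hcol j
      · simp [h]
    rcases le_total p q with h | h
    · rw [min_eq_left (show (p:ℝ) ≤ (q:ℝ) by exact_mod_cast h)]; exact hrowB
    · rw [min_eq_right (show (q:ℝ) ≤ (p:ℝ) by exact_mod_cast h)]; exact hcolB
  have hLHS : ∑ i ∈ range k, ∑ j ∈ range k, a i * b j * D i j
      = ∑ p ∈ range k, ∑ q ∈ range k, α p * β q *
          (∑ i ∈ range k, ∑ j ∈ range k,
            (if i ≤ p then (1:ℝ) else 0) * (if j ≤ q then 1 else 0) * D i j) := by
    have step1 : ∀ i ∈ range k, ∀ j ∈ range k, a i * b j * D i j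
        = ∑ p ∈ range k, ∑ q ∈ range k,
            α p * β q * ((if i ≤ p then (1:ℝ) else 0) * (if j ≤ q then 1 else 0) * D i j) := by
      intro i hi j hj
      rw [hrep a α hα hak i (Finset.mem_range.mp hi),
          hrep b β hβ hbk j (Finset.mem_range.mp hj)]
      rw [Finset.sum_mul_sum]
      rw [Finset.sum_mul]
      refine Finset.sum_congr rfl (fun p _ => ?_)
      rw [Finset.sum_mul]
      refine Finset.sum_congr rfl (fun q _ => ?_)
      ring
    calc ∑ i ∈ range k, ∑ j ∈ range k, a i * b j * D i j
        = ∑ i ∈ range k, ∑ j ∈ range k, ∑ p ∈ range k, ∑ q ∈ range k,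
            α p * β q * ((if i ≤ p then (1:ℝ) else 0) * (if j ≤ q then 1 else 0) * D i j) := by
          refine Finset.sum_congr rfl (fun i hi => Finset.sum_congr rfl (fun j hj => ?_))
          exact step1 i hi j hj
      _ = ∑ p ∈ range k, ∑ q ∈ range k, ∑ i ∈ range k, ∑ j ∈ range k,
            α p * β q * ((if i ≤ p then (1:ℝ) else 0) * (if j ≤ q then 1 else 0) * D i j) := by
          exact sum4_swap_aux (range k) _
      _ = ∑ p ∈ range k, ∑ q ∈ range k, α p * β q *
            (∑ i ∈ range k, ∑ j ∈ range k,
              (if i ≤ p then (1:ℝ) else 0) * (if j ≤ q then 1 else 0) * D i j) := by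
          refine Finset.sum_congr rfl (fun p _ => Finset.sum_congr rfl (fun q _ => ?_))
          rw [Finset.mul_sum]
          refine Finset.sum_congr rfl (fun i _ => ?_)
          rw [Finset.mul_sum]
  have hRHS : ∑ i ∈ range k, a i * b i
      = ∑ p ∈ range k, ∑ q ∈ range k, α p * β q * ((min p q : ℝ) + 1) := by
    calc ∑ i ∈ range k, a i * b i
        = ∑ i ∈ range k, ∑ p ∈ range k, ∑ q ∈ range k,
            α p * β q * ((if i ≤ p then (1:ℝ) else 0) * (if i ≤ q then 1 else 0)) := by
          refine Finset.sum_congr rfl (fun i hi => ?_)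
          rw [hrep a α hα hak i (Finset.mem_range.mp hi),
              hrep b β hβ hbk i (Finset.mem_range.mp hi)]
          rw [Finset.sum_mul_sum]
          refine Finset.sum_congr rfl (fun p _ => Finset.sum_congr rfl (fun q _ => ?_))
          ring
      _ = ∑ p ∈ range k, ∑ q ∈ range k, ∑ i ∈ range k,
            α p * β q * ((if i ≤ p then (1:ℝ) else 0) * (if i ≤ q then 1 else 0)) :=
          sum3_swap_aux (range k) _
      _ = ∑ p ∈ range k, ∑ q ∈ range k, α p * β q * ((min p q : ℝ) + 1) := by
          refine Finset.sum_congr rfl (fun p hp => Finset.sum_congr rfl (fun q hq => ?_))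
          rw [← Finset.mul_sum, hind p q (Finset.mem_range.mp hp) (Finset.mem_range.mp hq)]
  rw [hLHS, hRHS]
  refine Finset.sum_le_sum (fun p hp => Finset.sum_le_sum (fun q hq => ?_))
  exact mul_le_mul_of_nonneg_left (hS p q (Finset.mem_range.mp hp) (Finset.mem_range.mp hq))
    (mul_nonneg (hα0 p) (hβ0 q))

lemma substoch_fin (k : ℕ) (a b : Fin k → ℝ) (D : Fin k → Fin k → ℝ)
    (ha : Antitone a) (hb : Antitone b) (ha0 : ∀ i, 0 ≤ a i) (hb0 : ∀ i, 0 ≤ b i)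
    (hD0 : ∀ i j, 0 ≤ D i j)
    (hrow : ∀ i, ∑ j, D i j ≤ 1) (hcol : ∀ j, ∑ i, D i j ≤ 1) :
    ∑ i, ∑ j, a i * b j * D i j ≤ ∑ i, a i * b i := by
  set a' : ℕ → ℝ := fun i => if h : i < k then a ⟨i, h⟩ else 0 with ha'
  set b' : ℕ → ℝ := fun i => if h : i < k then b ⟨i, h⟩ else 0 with hb'
  set D' : ℕ → ℕ → ℝ := fun i j =>
    if h : i < k ∧ j < k then D ⟨i, h.1⟩ ⟨j, h.2⟩ else 0 with hD'
  have ext_anti : ∀ (c : Fin k → ℝ), Antitone c → (∀ i, 0 ≤ c i) →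
      Antitone (fun i : ℕ => if h : i < k then c ⟨i, h⟩ else 0) := by
    intro c hc hc0 i j hij
    by_cases hj : j < k
    · have hi : i < k := lt_of_le_of_lt hij hj
      simp only [dif_pos hi, dif_pos hj]
      exact hc (by exact hij)
    · simp only [dif_neg hj]
      by_cases hi : i < k
      · simp only [dif_pos hi]; exact hc0 _
      · simp [dif_neg hi]
  have ha'anti : Antitone a' := ext_anti a ha ha0
  have hb'anti : Antitone b' := ext_anti b hb hb0
  have ha'0 : ∀ i, 0 ≤ a' i := by
    intro i; by_cases h : i < k <;> simp [ha', h]; exact ha0 _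
  have hb'0 : ∀ i, 0 ≤ b' i := by
    intro i; by_cases h : i < k <;> simp [hb', h]; exact hb0 _
  have ha'k : a' k = 0 := by simp [ha']
  have hb'k : b' k = 0 := by simp [hb']
  have hD'0 : ∀ i j, 0 ≤ D' i j := by
    intro i j
    by_cases h : i < k ∧ j < k
    · simp only [hD', dif_pos h]; exact hD0 _ _
    · simp [hD', dif_neg h]
  have hrow' : ∀ i, ∑ j ∈ range k, D' i j ≤ 1 := by
    intro i
    by_cases hi : i < k
    · have : ∑ j ∈ range k, D' i j = ∑ j, D ⟨i, hi⟩ j := by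
        rw [← Fin.sum_univ_eq_sum_range (fun j => D' i j) k]
        exact Finset.sum_congr rfl (fun j _ => by simp [hD', hi, j.isLt])
      rw [this]; exact hrow _
    · have : ∑ j ∈ range k, D' i j = 0 := by
        refine Finset.sum_eq_zero (fun j _ => ?_)
        simp [hD', hi]
      rw [this]; norm_num
  have hcol' : ∀ j, ∑ i ∈ range k, D' i j ≤ 1 := by
    intro j
    by_cases hj : j < k
    · have : ∑ i ∈ range k, D' i j = ∑ i, D i ⟨j, hj⟩ := by
        rw [← Fin.sum_univ_eq_sum_range (fun i => D' i j) k]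
        exact Finset.sum_congr rfl (fun i _ => by simp [hD', hj, i.isLt])
      rw [this]; exact hcol _
    · have : ∑ i ∈ range k, D' i j = 0 := by
        refine Finset.sum_eq_zero (fun i _ => ?_)
        simp [hD', hj]
      rw [this]; norm_num
  have key := substoch_nat k a' b' D' ha'anti hb'anti ha'0 hb'0 ha'k hb'k hD'0 hrow' hcol'
  have hL : ∑ i ∈ range k, ∑ j ∈ range k, a' i * b' j * D' i j
      = ∑ i, ∑ j, a i * b j * D i j := by
    rw [← Fin.sum_univ_eq_sum_range (fun i => ∑ j ∈ range k, a' i * b' j * D' i j) k]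
    refine Finset.sum_congr rfl (fun i _ => ?_)
    rw [← Fin.sum_univ_eq_sum_range (fun j => a' i.val * b' j * D' i.val j) k]
    refine Finset.sum_congr rfl (fun j _ => ?_)
    simp [ha', hb', hD', i.isLt, j.isLt]
  have hR : ∑ i ∈ range k, a' i * b' i = ∑ i, a i * b i := by
    rw [← Fin.sum_univ_eq_sum_range (fun i => a' i * b' i) k]
    refine Finset.sum_congr rfl (fun i _ => ?_)
    simp [ha', hb', i.isLt]
  rw [hL, hR] at key
  exact key

lemma frobSq_eq_trace {n m : ℕ} (A : Matrix (Fin n) (Fin m) ℝ) :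
    frobSq A = Matrix.trace (Aᵀ * A) := by
  simp only [frobSq, Matrix.trace, Matrix.diag, Matrix.mul_apply, Matrix.transpose_apply, sq]
  rw [Finset.sum_comm]

lemma frobSq_svd {n m k : ℕ} (U : Matrix (Fin n) (Fin k) ℝ) (V : Matrix (Fin m) (Fin k) ℝ)
    (d : Fin k → ℝ) (hU : Uᵀ * U = 1) (hV : Vᵀ * V = 1) :
    frobSq (U * diagonal d * Vᵀ) = ∑ i, d i ^ 2 := by
  rw [frobSq_eq_trace]
  have h1 : (U * diagonal d * Vᵀ)ᵀ * (U * diagonal d * Vᵀ)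
      = V * (diagonal d * diagonal d) * Vᵀ := by
    rw [Matrix.transpose_mul, Matrix.transpose_mul, Matrix.diagonal_transpose]
    calc Vᵀᵀ * (diagonal d * Uᵀ) * (U * diagonal d * Vᵀ)
        = V * (diagonal d * (Uᵀ * U) * diagonal d) * Vᵀ := by
          rw [Matrix.transpose_transpose]
          noncomm_ring [Matrix.mul_assoc]
      _ = V * (diagonal d * diagonal d) * Vᵀ := by rw [hU, Matrix.mul_one]
  rw [h1, Matrix.trace_mul_comm, ← Matrix.mul_assoc, hV, Matrix.one_mul,
    Matrix.diagonal_mul_diagonal, Matrix.trace_diagonal]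
  exact Finset.sum_congr rfl (fun i _ => (sq (d i)).symm)

lemma frobSq_sub_expand {n m : ℕ} (Y B : Matrix (Fin n) (Fin m) ℝ) :
    frobSq (Y - B) = frobSq Y - 2 * Matrix.trace (Yᵀ * B) + frobSq B := by
  have htr : Matrix.trace (Yᵀ * B) = ∑ i, ∑ j, Y i j * B i j := by
    simp only [Matrix.trace, Matrix.diag, Matrix.mul_apply, Matrix.transpose_apply]
    rw [Finset.sum_comm]
  rw [htr]
  simp only [frobSq, Matrix.sub_apply]
  have hpt : ∀ (i : Fin n) (j : Fin m), (Y i j - B i j) ^ 2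
      = Y i j ^ 2 - 2 * (Y i j * B i j) + B i j ^ 2 := by intros; ring
  simp only [hpt, Finset.sum_add_distrib, Finset.sum_sub_distrib, ← Finset.mul_sum]

lemma row_sq_sum_le {n k : ℕ} (U W : Matrix (Fin n) (Fin k) ℝ)
    (hU : Uᵀ * U = 1) (hW : Wᵀ * W = 1) (i : Fin k) :
    ∑ j, ((Uᵀ * W) i j) ^ 2 ≤ 1 := by
  set E : Matrix (Fin n) (Fin k) ℝ := U - W * (Wᵀ * U) with hE
  have hWtW : ∀ X : Matrix (Fin k) (Fin k) ℝ, Wᵀ * (W * X) = X := by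
    intro X; rw [← Matrix.mul_assoc, hW, Matrix.one_mul]
  have t2 : Uᵀ * (W * (Wᵀ * U)) = (Uᵀ * W) * (Wᵀ * U) := (Matrix.mul_assoc _ _ _).symm
  have t3 : (W * (Wᵀ * U))ᵀ * U = (Uᵀ * W) * (Wᵀ * U) := by
    rw [Matrix.transpose_mul, Matrix.transpose_mul, Matrix.transpose_transpose,
      Matrix.mul_assoc]
  have t4 : (W * (Wᵀ * U))ᵀ * (W * (Wᵀ * U)) = (Uᵀ * W) * (Wᵀ * U) := by
    rw [Matrix.transpose_mul, Matrix.transpose_mul, Matrix.transpose_transpose,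
      Matrix.mul_assoc, hWtW]
  have h1 : Eᵀ * E = 1 - (Uᵀ * W) * (Wᵀ * U) := by
    rw [hE, Matrix.transpose_sub, Matrix.sub_mul, Matrix.mul_sub, Matrix.mul_sub,
      hU, t2, t3, t4]
    abel
  have h2 : ((Uᵀ * W) * (Wᵀ * U)) i i = ∑ j, ((Uᵀ * W) i j) ^ 2 := by
    have hsym : ∀ j, (Wᵀ * U) j i = (Uᵀ * W) i j := by
      intro j
      simp only [Matrix.mul_apply, Matrix.transpose_apply]
      exact Finset.sum_congr rfl (fun l _ => mul_comm _ _)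
    rw [Matrix.mul_apply]
    exact Finset.sum_congr rfl (fun j _ => by rw [hsym j, sq])
  have h3 : 0 ≤ (Eᵀ * E) i i := by
    simp only [Matrix.mul_apply, Matrix.transpose_apply]
    exact Finset.sum_nonneg (fun l _ => mul_self_nonneg _)
  rw [h1] at h3
  simp only [Matrix.sub_apply, Matrix.one_apply_eq] at h3
  rw [h2] at h3
  linarith

lemma col_sq_sum_le {n k : ℕ} (U W : Matrix (Fin n) (Fin k) ℝ)
    (hU : Uᵀ * U = 1) (hW : Wᵀ * W = 1) (j : Fin k) :
    ∑ i, ((Uᵀ * W) i j) ^ 2 ≤ 1 := by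
  have h := row_sq_sum_le W U hW hU j
  calc ∑ i, ((Uᵀ * W) i j) ^ 2 = ∑ i, ((Wᵀ * U) j i) ^ 2 := by
        refine Finset.sum_congr rfl (fun i _ => ?_)
        congr 1
        simp only [Matrix.mul_apply, Matrix.transpose_apply]
        exact Finset.sum_congr rfl (fun l _ => mul_comm _ _)
    _ ≤ 1 := h

lemma trace_diag_sandwich {k : ℕ} (σ τ : Fin k → ℝ) (M N : Matrix (Fin k) (Fin k) ℝ) :
    Matrix.trace (diagonal σ * M * diagonal τ * Nᵀ)
      = ∑ i, ∑ j, σ i * τ j * (M i j * N i j) := by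
  simp only [Matrix.trace, Matrix.diag]
  refine Finset.sum_congr rfl (fun i _ => ?_)
  rw [Matrix.mul_apply]
  refine Finset.sum_congr rfl (fun j _ => ?_)
  rw [Matrix.transpose_apply, Matrix.mul_diagonal, Matrix.diagonal_mul]
  ring

end Aux

/-- Let `Θ` be a threshold function, `λ ≥ 0`, `P` a penalty satisfying condition (constrP)
for `Θ`, and `Y = U diag(σ) Vᵀ` an SVD of `Y ∈ ℝ^{n×m}` with `Θ(·;λ)` continuous at each
singular value `σ_i` of `Y`. Then the matrix thresholding `B̂ = Θ^σ(Y;λ) = U diag(Θ(σ_i;λ)) Vᵀ`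
is a global minimizer of `F(B) = ‖Y−B‖_F²/2 + ∑_i P(σ_i(B);λ)`. (The singular values of `B̂`
are `Θ(σ_i;λ)`, and the minimization is stated over all `B` together with any SVD of `B`.) -/
theorem matrix_thresholding_minimizer {n m : ℕ}
    (Θ : ℝ → ℝ → ℝ) (hΘ : IsThresholdFunction Θ) (lam : ℝ) (hlam : 0 ≤ lam)
    (P q : ℝ → ℝ)
    (hq : ∀ θ : ℝ, 0 ≤ q θ) (hqΘ : ∀ t : ℝ, q (Θ t lam) = 0)
    (hP : ∀ θ : ℝ,
      P θ - P 0 = (∫ u in (0:ℝ)..|θ|, (sSup {s : ℝ | Θ s lam ≤ u} - u)) + q θ)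
    (Y : Matrix (Fin n) (Fin m) ℝ)
    (U : Matrix (Fin n) (Fin (min n m)) ℝ) (σ : Fin (min n m) → ℝ)
    (V : Matrix (Fin m) (Fin (min n m)) ℝ)
    (hY : IsSVD Y U σ V)
    (hcont : ∀ i, ContinuousAt (fun s => Θ s lam) (σ i)) :
    ∀ (B : Matrix (Fin n) (Fin m) ℝ)
      (UB : Matrix (Fin n) (Fin (min n m)) ℝ) (σB : Fin (min n m) → ℝ)
      (VB : Matrix (Fin m) (Fin (min n m)) ℝ), IsSVD B UB σB VB →
      frobSq (Y - U * diagonal (fun i => Θ (σ i) lam) * Vᵀ) / 2 + ∑ i, P (Θ (σ i) lam)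
        ≤ frobSq (Y - B) / 2 + ∑ i, P (σB i) := by
  obtain ⟨hU, hV, hσanti, hσ0, hYeq⟩ := hY
  obtain ⟨hodd, hmono, htop, hbound⟩ := hΘ lam hlam
  intro B UB σB VB hB
  obtain ⟨hUB, hVB, hσBanti, hσB0, hBeq⟩ := hB
  -- Step 1: Frobenius norm at the thresholded matrix
  have hBhat : frobSq (Y - U * diagonal (fun i => Θ (σ i) lam) * Vᵀ)
      = ∑ i, (σ i - Θ (σ i) lam) ^ 2 := by
    have hdiff : Y - U * diagonal (fun i => Θ (σ i) lam) * Vᵀ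
        = U * diagonal (fun i => σ i - Θ (σ i) lam) * Vᵀ := by
      rw [hYeq, ← Matrix.sub_mul, ← Matrix.mul_sub, Matrix.diagonal_sub]
    rw [hdiff, frobSq_svd U V _ hU hV]
  -- Step 2: von Neumann-type lower bound for frobSq (Y - B)
  set M : Matrix (Fin (min n m)) (Fin (min n m)) ℝ := Uᵀ * UB with hM
  set N : Matrix (Fin (min n m)) (Fin (min n m)) ℝ := Vᵀ * VB with hN
  have htrYB : Matrix.trace (Yᵀ * B) = ∑ i, ∑ j, σ i * σB j * (M i j * N i j) := by
    have hform : Yᵀ * B = V * (diagonal σ * M * diagonal σB * VBᵀ) := by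
      rw [hYeq, hBeq, hM]
      simp only [Matrix.transpose_mul, Matrix.diagonal_transpose, Matrix.transpose_transpose,
        Matrix.mul_assoc]
    rw [hform, Matrix.trace_mul_comm]
    rw [show diagonal σ * M * diagonal σB * VBᵀ * V
        = diagonal σ * M * diagonal σB * Nᵀ by
      rw [hN]
      simp only [Matrix.transpose_mul, Matrix.transpose_transpose, Matrix.mul_assoc]]
    rw [trace_diag_sandwich]
  have hDrow : ∀ i, ∑ j, ((M i j) ^ 2 + (N i j) ^ 2) / 2 ≤ 1 := by
    intro i
    have h1 := row_sq_sum_le U UB hU hUB i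
    have h2 := row_sq_sum_le V VB hV hVB i
    rw [← hM] at h1; rw [← hN] at h2
    calc ∑ j, ((M i j) ^ 2 + (N i j) ^ 2) / 2
        = ((∑ j, (M i j) ^ 2) + ∑ j, (N i j) ^ 2) / 2 := by
          rw [← Finset.sum_add_distrib, ← Finset.sum_div]
      _ ≤ 1 := by linarith
  have hDcol : ∀ j, ∑ i, ((M i j) ^ 2 + (N i j) ^ 2) / 2 ≤ 1 := by
    intro j
    have h1 := col_sq_sum_le U UB hU hUB j
    have h2 := col_sq_sum_le V VB hV hVB j
    rw [← hM] at h1; rw [← hN] at h2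
    calc ∑ i, ((M i j) ^ 2 + (N i j) ^ 2) / 2
        = ((∑ i, (M i j) ^ 2) + ∑ i, (N i j) ^ 2) / 2 := by
          rw [← Finset.sum_add_distrib, ← Finset.sum_div]
      _ ≤ 1 := by linarith
  have hvn : Matrix.trace (Yᵀ * B) ≤ ∑ i, σ i * σB i := by
    rw [htrYB]
    calc ∑ i, ∑ j, σ i * σB j * (M i j * N i j)
        ≤ ∑ i, ∑ j, σ i * σB j * (((M i j) ^ 2 + (N i j) ^ 2) / 2) := by
          refine Finset.sum_le_sum (fun i _ => Finset.sum_le_sum (fun j _ => ?_))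
          have hσσ : 0 ≤ σ i * σB j := mul_nonneg (hσ0 i) (hσB0 j)
          nlinarith [sq_nonneg (M i j - N i j)]
      _ ≤ ∑ i, σ i * σB i :=
          substoch_fin (min n m) σ σB (fun i j => ((M i j) ^ 2 + (N i j) ^ 2) / 2)
            hσanti hσBanti hσ0 hσB0
            (fun i j => by positivity) hDrow hDcol
  have hfrobY : frobSq Y = ∑ i, σ i ^ 2 := by rw [hYeq, frobSq_svd U V σ hU hV]
  have hfrobB : frobSq B = ∑ i, σB i ^ 2 := by rw [hBeq, frobSq_svd UB VB σB hUB hVB]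
  have hlow : ∑ i, (σ i - σB i) ^ 2 ≤ frobSq (Y - B) := by
    rw [frobSq_sub_expand, hfrobY, hfrobB]
    have hpt : ∀ i : Fin (min n m), (σ i - σB i) ^ 2
        = σ i ^ 2 - 2 * (σ i * σB i) + σB i ^ 2 := fun i => by ring
    simp only [hpt, Finset.sum_add_distrib, Finset.sum_sub_distrib, ← Finset.mul_sum]
    linarith
  -- Step 3: scalar minimization termwise
  have hscal : ∑ i, ((σ i - Θ (σ i) lam) ^ 2 / 2 + P (Θ (σ i) lam))
      ≤ ∑ i, ((σ i - σB i) ^ 2 / 2 + P (σB i)) :=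
    Finset.sum_le_sum (fun i _ =>
      scalar_min_aux Θ lam hmono htop hbound P q hq hqΘ hP (σ i) (σB i) (hσ0 i) (hσB0 i))
  -- Final assembly
  rw [hBhat]
  have e1 : (∑ i, (σ i - Θ (σ i) lam) ^ 2) / 2 + ∑ i, P (Θ (σ i) lam)
      = ∑ i, ((σ i - Θ (σ i) lam) ^ 2 / 2 + P (Θ (σ i) lam)) := by
    rw [Finset.sum_add_distrib, Finset.sum_div]
  have e2 : ∑ i, ((σ i - σB i) ^ 2 / 2 + P (σB i))
      = (∑ i, (σ i - σB i) ^ 2) / 2 + ∑ i, P (σB i) := by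
    rw [Finset.sum_add_distrib, Finset.sum_div]
  rw [e1]
  calc ∑ i, ((σ i - Θ (σ i) lam) ^ 2 / 2 + P (Θ (σ i) lam))
      ≤ ∑ i, ((σ i - σB i) ^ 2 / 2 + P (σB i)) := hscal
    _ = (∑ i, (σ i - σB i) ^ 2) / 2 + ∑ i, P (σB i) := e2
    _ ≤ frobSq (Y - B) / 2 + ∑ i, P (σB i) := by linarith
end

section
/- Let Θ be a threshold function, λ ≥ 0, and P a penalty satisfying condition (constrP) for Θ. Let Y ∈ ℝ^{n×m} and suppose Θ(·;λ) is continuous at every singular value of Y. Then B̂ = Θ^σ(Y;λ) is the UNIQUE global minimizer over B ∈ ℝ^{n×m} of F(B) = ‖Y−B‖_F²/2 + Σ_i P(σ_i(B);λ); that is, any global minimizer B of F satisfies B = B̂. -/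
open Matrix

open Filter MeasureTheory intervalIntegral

set_option linter.unusedSectionVars false
set_option linter.unusedVariables false

section Scalar

variable (Θ : ℝ → ℝ → ℝ) (lam : ℝ)

noncomputable def Sfun (u : ℝ) : ℝ := sSup {s : ℝ | Θ s lam ≤ u}

variable {Θ lam}
variable (hmono : Monotone (fun t => Θ t lam))
  (htop : Filter.Tendsto (fun t => Θ t lam) Filter.atTop Filter.atTop)
  (hzero : Θ 0 lam = 0)

include htop in
lemma Sfun_bdd (u : ℝ) : BddAbove {s : ℝ | Θ s lam ≤ u} := by
  obtain ⟨M, hM⟩ := (htop.eventually_ge_atTop (u + 1)).exists_forall_of_atTop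
  refine ⟨M, fun s hs => ?_⟩
  by_contra hc
  push_neg at hc
  have := hM s hc.le
  have : Θ s lam ≤ u := hs
  linarith
include hzero in
lemma Sfun_nonempty {u : ℝ} (hu : 0 ≤ u) : Set.Nonempty {s : ℝ | Θ s lam ≤ u} :=
  ⟨0, by simpa [hzero] using hu⟩

include htop in
lemma Sfun_ge {t u : ℝ} (h : Θ t lam ≤ u) : t ≤ Sfun Θ lam u :=
  le_csSup (Sfun_bdd htop u) h

include hmono hzero in
lemma Sfun_le {t u : ℝ} (hu : 0 ≤ u) (h : u < Θ t lam) : Sfun Θ lam u ≤ t := by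
  refine csSup_le (Sfun_nonempty hzero hu) (fun s hs => ?_)
  by_contra hc
  push_neg at hc
  have := hmono hc.le
  simp only at this
  have : Θ s lam ≤ u := hs
  linarith [hmono hc.le, h]

include hmono htop hzero in
lemma Sfun_monoOn : MonotoneOn (Sfun Θ lam) (Set.Ici 0) := by
  intro u hu v hv huv
  exact csSup_le_csSup (Sfun_bdd htop v) (Sfun_nonempty hzero hu)
    (fun s hs => le_trans hs huv)

include hmono htop hzero in
lemma Sfun_intble {x y : ℝ} (hx : 0 ≤ x) (hxy : x ≤ y) :
    IntervalIntegrable (Sfun Θ lam) volume x y := by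
  apply MonotoneOn.intervalIntegrable
  apply (Sfun_monoOn hmono htop hzero).mono
  rw [Set.uIcc_of_le hxy]
  exact fun z hz => le_trans hx hz.1

end Scalar

section Scalar2

variable {Θ : ℝ → ℝ → ℝ} {lam : ℝ} {P q : ℝ → ℝ}
variable (hmono : Monotone (fun t => Θ t lam))
  (htop : Filter.Tendsto (fun t => Θ t lam) Filter.atTop Filter.atTop)
  (hzero : Θ 0 lam = 0)
  (hq : ∀ θ : ℝ, 0 ≤ q θ) (hqΘ : ∀ t : ℝ, q (Θ t lam) = 0)
  (hP : ∀ θ : ℝ,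
      P θ - P 0 = (∫ u in (0:ℝ)..|θ|, (sSup {s : ℝ | Θ s lam ≤ u} - u)) + q θ)

include hmono htop hzero in
lemma Sfun_sub_intble {x y : ℝ} (hx : 0 ≤ x) (hxy : x ≤ y) (c : ℝ) :
    IntervalIntegrable (fun u => Sfun Θ lam u - c * u) volume x y :=
  (Sfun_intble hmono htop hzero hx hxy).sub
    ((intervalIntegrable_id.const_mul c))

include hmono htop hzero hP in
lemma Pdiff {a b : ℝ} (ha : 0 ≤ a) (hab : a ≤ b) :
    P b - P a = (∫ u in a..b, (Sfun Θ lam u - u)) + q b - q a := by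
  have h1 := hP a
  have h2 := hP b
  have hb : 0 ≤ b := le_trans ha hab
  rw [abs_of_nonneg ha] at h1
  rw [abs_of_nonneg hb] at h2
  have hsplit : (∫ u in (0:ℝ)..a, (Sfun Θ lam u - u)) + (∫ u in a..b, (Sfun Θ lam u - u))
      = ∫ u in (0:ℝ)..b, (Sfun Θ lam u - u) := by
    apply integral_add_adjacent_intervals
    · simpa using Sfun_sub_intble hmono htop hzero le_rfl ha 1
    · simpa using Sfun_sub_intble hmono htop hzero ha hab 1
  have e1 : (∫ u in (0:ℝ)..a, (sSup {s : ℝ | Θ s lam ≤ u} - u)) = ∫ u in (0:ℝ)..a, (Sfun Θ lam u - u) := rfl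
  have e2 : (∫ u in (0:ℝ)..b, (sSup {s : ℝ | Θ s lam ≤ u} - u)) = ∫ u in (0:ℝ)..b, (Sfun Θ lam u - u) := rfl
  rw [e1] at h1; rw [e2] at h2
  linarith

-- value of ∫ (t - u) du
lemma int_linear (t x y : ℝ) : (∫ u in x..y, (t - u)) = (t - x)^2/2 - (t - y)^2/2 := by
  rw [intervalIntegral.integral_sub (_root_.intervalIntegrable_const) intervalIntegrable_id]
  simp [integral_id]
  ring

include hmono htop hzero hq hqΘ hP in
/-- case Θ t ≤ s : difference identity -/
lemma diff_eq_of_ge {t s : ℝ} (ht : 0 ≤ t) (htt : 0 ≤ Θ t lam) (has : Θ t lam ≤ s) :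
    ((s-t)^2/2 + P s) - ((Θ t lam - t)^2/2 + P (Θ t lam))
      = (∫ u in (Θ t lam)..s, (Sfun Θ lam u - t)) + q s := by
  set a := Θ t lam with ha
  have hPd := Pdiff hmono htop hzero hP htt has
  rw [hqΘ t] at hPd
  have hint : (∫ u in a..s, (Sfun Θ lam u - t))
      = (∫ u in a..s, (Sfun Θ lam u - u)) - (∫ u in a..s, (t - u)) := by
    rw [← intervalIntegral.integral_sub (by simpa using Sfun_sub_intble hmono htop hzero htt has 1)
      ((_root_.intervalIntegrable_const).sub intervalIntegrable_id)]
    congr 1; funext u; ring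
  rw [int_linear] at hint
  linarith

include hmono htop hzero hq hqΘ hP in
/-- case s ≤ Θ t : difference identity -/
lemma diff_eq_of_le {t s : ℝ} (ht : 0 ≤ t) (hs : 0 ≤ s) (has : s ≤ Θ t lam) :
    ((s-t)^2/2 + P s) - ((Θ t lam - t)^2/2 + P (Θ t lam))
      = (∫ u in s..(Θ t lam), (t - Sfun Θ lam u)) + q s := by
  set a := Θ t lam with ha
  have hPd := Pdiff hmono htop hzero hP hs has
  rw [hqΘ t] at hPd
  have hint : (∫ u in s..a, (t - Sfun Θ lam u))
      = (∫ u in s..a, (t - u)) - (∫ u in s..a, (Sfun Θ lam u - u)) := by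
    rw [← intervalIntegral.integral_sub ((_root_.intervalIntegrable_const).sub intervalIntegrable_id)
      (by simpa using Sfun_sub_intble hmono htop hzero hs has 1)]
    congr 1; funext u; ring
  rw [int_linear] at hint
  linarith

end Scalar2

section Scalar3

variable {Θ : ℝ → ℝ → ℝ} {lam : ℝ} {P q : ℝ → ℝ}
variable (hmono : Monotone (fun t => Θ t lam))
  (htop : Filter.Tendsto (fun t => Θ t lam) Filter.atTop Filter.atTop)
  (hzero : Θ 0 lam = 0)

include htop in
lemma int_ge_nonneg {t s : ℝ} (has : Θ t lam ≤ s) :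
    0 ≤ ∫ u in (Θ t lam)..s, (Sfun Θ lam u - t) := by
  apply intervalIntegral.integral_nonneg has
  intro u hu
  have := Sfun_ge htop (le_trans le_rfl hu.1 : Θ t lam ≤ u)
  linarith

include hmono hzero in
lemma int_le_nonneg {t x : ℝ} (hx : 0 ≤ x) (hxa : x ≤ Θ t lam) :
    0 ≤ ∫ u in x..(Θ t lam), (t - Sfun Θ lam u) := by
  apply intervalIntegral.integral_nonneg_of_ae_restrict hxa
  rw [Filter.EventuallyLE, MeasureTheory.ae_restrict_iff' measurableSet_Icc, MeasureTheory.ae_iff]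
  simp only [Pi.zero_apply]
  refine measure_mono_null (fun u hu => ?_) (measure_singleton (Θ t lam))
  · 
    simp only [Set.mem_setOf_eq, not_forall] at hu
    obtain ⟨hu1, hu2⟩ := hu
    push_neg at hu2
    simp only [Set.mem_singleton_iff]
    by_contra hne
    have hlt : u < Θ t lam := lt_of_le_of_ne hu1.2 hne
    have := Sfun_le hmono hzero (le_trans hx hu1.1) hlt
    linarith

include hmono htop hzero in
lemma int_ge_pos {t s : ℝ} (hcont : ContinuousAt (fun x => Θ x lam) t)
    (htt : 0 ≤ Θ t lam) (has : Θ t lam < s) :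
    0 < ∫ u in (Θ t lam)..s, (Sfun Θ lam u - t) := by
  set a := Θ t lam with ha
  set u₁ := (a + s)/2 with hu₁
  have hau : a < u₁ := by rw [hu₁]; linarith
  have hus : u₁ < s := by rw [hu₁]; linarith
  have h1 : Θ t lam < u₁ := hau
  have hev : ∀ᶠ x in nhds t, Θ x lam < u₁ := hcont.eventually_lt_const h1
  rw [Metric.eventually_nhds_iff] at hev
  obtain ⟨δ, hδ, hδ'⟩ := hev
  set ε := δ/2 with hε
  have hεpos : 0 < ε := by positivity
  have hθε : Θ (t + ε) lam < u₁ := by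
    apply hδ'
    rw [Real.dist_eq, show t + ε - t = ε by ring, abs_of_pos hεpos]
    rw [hε]; linarith
  have hkey : ∀ u ∈ Set.Icc u₁ s, t + ε ≤ Sfun Θ lam u := fun u hu =>
    Sfun_ge htop (le_trans hθε.le hu.1)
  have hintbl : ∀ x y : ℝ, 0 ≤ x → x ≤ y →
      IntervalIntegrable (fun u => Sfun Θ lam u - t) volume x y := fun x y h0 hxy =>
    (Sfun_intble hmono htop hzero h0 hxy).sub _root_.intervalIntegrable_const
  have hsplit : (∫ u in a..u₁, (Sfun Θ lam u - t)) + (∫ u in u₁..s, (Sfun Θ lam u - t))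
      = ∫ u in a..s, (Sfun Θ lam u - t) :=
    integral_add_adjacent_intervals (hintbl a u₁ htt hau.le)
      (hintbl u₁ s (le_trans htt hau.le) hus.le)
  have h2 : 0 ≤ ∫ u in a..u₁, (Sfun Θ lam u - t) := by
    apply intervalIntegral.integral_nonneg hau.le
    intro u hu
    have := Sfun_ge htop (hu.1 : Θ t lam ≤ u)
    linarith
  have h3 : (∫ u in u₁..s, (ε : ℝ)) ≤ ∫ u in u₁..s, (Sfun Θ lam u - t) := by
    apply integral_mono_on hus.le _root_.intervalIntegrable_const
      (hintbl u₁ s (le_trans htt hau.le) hus.le)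
    intro u hu
    have := hkey u hu
    linarith
  rw [intervalIntegral.integral_const] at h3
  have : 0 < (s - u₁) * ε := by
    apply mul_pos (by linarith) hεpos
  simp only [smul_eq_mul] at h3
  linarith

include hmono htop hzero in
lemma int_le_pos {t s : ℝ} (hcont : ContinuousAt (fun x => Θ x lam) t)
    (ht : Θ t lam ≤ t) (hs : 0 ≤ s) (has : s < Θ t lam) :
    0 < ∫ u in s..(Θ t lam), (t - Sfun Θ lam u) := by
  set a := Θ t lam with ha
  set u₁ := (s + a)/2 with hu₁
  have hsu : s < u₁ := by rw [hu₁]; linarith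
  have hua : u₁ < a := by rw [hu₁]; linarith
  have h1 : u₁ < Θ t lam := hua
  have hev : ∀ᶠ x in nhds t, u₁ < Θ x lam := hcont.eventually_const_lt h1
  rw [Metric.eventually_nhds_iff] at hev
  obtain ⟨δ, hδ, hδ'⟩ := hev
  set ε := δ/2 with hε
  have hεpos : 0 < ε := by positivity
  have hθε : u₁ < Θ (t - ε) lam := by
    apply hδ'
    rw [Real.dist_eq, show t - ε - t = -ε by ring, abs_neg, abs_of_pos hεpos]
    rw [hε]; linarith
  have hkey : ∀ u ∈ Set.Icc s u₁, Sfun Θ lam u ≤ t - ε := fun u hu =>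
    Sfun_le hmono hzero (le_trans hs hu.1) (lt_of_le_of_lt hu.2 hθε)
  have hintbl : ∀ x y : ℝ, 0 ≤ x → x ≤ y →
      IntervalIntegrable (fun u => t - Sfun Θ lam u) volume x y := fun x y h0 hxy =>
    (_root_.intervalIntegrable_const).sub (Sfun_intble hmono htop hzero h0 hxy)
  have hsplit : (∫ u in s..u₁, (t - Sfun Θ lam u)) + (∫ u in u₁..a, (t - Sfun Θ lam u))
      = ∫ u in s..a, (t - Sfun Θ lam u) :=
    integral_add_adjacent_intervals (hintbl s u₁ hs hsu.le)
      (hintbl u₁ a (le_trans hs hsu.le) hua.le)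
  have h2 : 0 ≤ ∫ u in u₁..a, (t - Sfun Θ lam u) :=
    int_le_nonneg hmono hzero (le_trans hs hsu.le) hua.le
  have h3 : (∫ u in s..u₁, (ε : ℝ)) ≤ ∫ u in s..u₁, (t - Sfun Θ lam u) := by
    apply integral_mono_on hsu.le _root_.intervalIntegrable_const (hintbl s u₁ hs hsu.le)
    intro u hu
    have := hkey u hu
    linarith
  rw [intervalIntegral.integral_const] at h3
  simp only [smul_eq_mul] at h3
  have : 0 < (u₁ - s) * ε := mul_pos (by linarith) hεpos
  linarith

end Scalar3

section Scalar4

variable {Θ : ℝ → ℝ → ℝ} {lam : ℝ} {P q : ℝ → ℝ}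
variable (hmono : Monotone (fun t => Θ t lam))
  (htop : Filter.Tendsto (fun t => Θ t lam) Filter.atTop Filter.atTop)
  (hzero : Θ 0 lam = 0)
  (hq : ∀ θ : ℝ, 0 ≤ q θ) (hqΘ : ∀ t : ℝ, q (Θ t lam) = 0)
  (hP : ∀ θ : ℝ,
      P θ - P 0 = (∫ u in (0:ℝ)..|θ|, (sSup {s : ℝ | Θ s lam ≤ u} - u)) + q θ)

include hmono htop hzero hq hqΘ hP in
lemma scalar_le {t s : ℝ} (ht : 0 ≤ t) (hs : 0 ≤ s)
    (htt : 0 ≤ Θ t lam) :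
    (Θ t lam - t)^2/2 + P (Θ t lam) ≤ (s - t)^2/2 + P s := by
  rcases le_total (Θ t lam) s with h | h
  · have hd := diff_eq_of_ge (hmono:=hmono) (htop:=htop) (hzero:=hzero) (hq:=hq) (hqΘ:=hqΘ) (hP:=hP) ht htt h
    have h1 := int_ge_nonneg htop h
    have h2 := hq s
    linarith
  · have hd := diff_eq_of_le (hmono:=hmono) (htop:=htop) (hzero:=hzero) (hq:=hq) (hqΘ:=hqΘ) (hP:=hP) ht hs h
    have h1 := int_le_nonneg hmono hzero hs h
    have h2 := hq s
    linarith

include hmono htop hzero hq hqΘ hP in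
lemma scalar_unique {t s : ℝ} (ht : 0 ≤ t) (hs : 0 ≤ s)
    (htt : 0 ≤ Θ t lam) (htt2 : Θ t lam ≤ t)
    (hcont : ContinuousAt (fun x => Θ x lam) t)
    (heq : (s - t)^2/2 + P s = (Θ t lam - t)^2/2 + P (Θ t lam)) :
    s = Θ t lam := by
  rcases lt_trichotomy s (Θ t lam) with h | h | h
  · exfalso
    have hd := diff_eq_of_le (hmono:=hmono) (htop:=htop) (hzero:=hzero) (hq:=hq) (hqΘ:=hqΘ) (hP:=hP) ht hs h.le
    have h1 := int_le_pos hmono htop hzero hcont htt2 hs h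
    have h2 := hq s
    linarith
  · exact h
  · exfalso
    have hd := diff_eq_of_ge (hmono:=hmono) (htop:=htop) (hzero:=hzero) (hq:=hq) (hqΘ:=hqΘ) (hP:=hP) ht htt h.le
    have h1 := int_ge_pos hmono htop hzero hcont htt h
    have h2 := hq s
    linarith

end Scalar4

section Abel

/-- partial double sum -/
def Tsum (x : ℕ → ℕ → ℝ) (p q : ℕ) : ℝ :=
  ∑ i ∈ Finset.range (p+1), ∑ j ∈ Finset.range (q+1), x i j

lemma abel1 (k : ℕ) (c x : ℕ → ℝ) :
    ∑ i ∈ Finset.range k, c i * x i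
      = (∑ p ∈ Finset.range k, (c p - c (p+1)) * (∑ i ∈ Finset.range (p+1), x i))
        + c k * ∑ i ∈ Finset.range k, x i := by
  induction k with
  | zero => simp
  | succ k ih =>
    have e1 : ∑ i ∈ Finset.range (k+1), c i * x i
        = (∑ i ∈ Finset.range k, c i * x i) + c k * x k := Finset.sum_range_succ _ k
    have e2 : ∑ i ∈ Finset.range (k+1), x i = (∑ i ∈ Finset.range k, x i) + x k :=
      Finset.sum_range_succ _ k
    have e3 : ∑ p ∈ Finset.range (k+1), (c p - c (p+1)) * (∑ i ∈ Finset.range (p+1), x i)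
        = (∑ p ∈ Finset.range k, (c p - c (p+1)) * (∑ i ∈ Finset.range (p+1), x i))
          + (c k - c (k+1)) * (∑ i ∈ Finset.range (k+1), x i) := Finset.sum_range_succ _ k
    rw [e1, ih, e3, e2]; ring

lemma abel2 (k : ℕ) (c d : ℕ → ℝ) (x : ℕ → ℕ → ℝ) (hc : c k = 0) (hd : d k = 0) :
    ∑ i ∈ Finset.range k, ∑ j ∈ Finset.range k, c i * d j * x i j
      = ∑ p ∈ Finset.range k, ∑ q ∈ Finset.range k,
          (c p - c (p+1)) * (d q - d (q+1)) * Tsum x p q := by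
  have step1 : ∀ i : ℕ, ∑ j ∈ Finset.range k, c i * d j * x i j
      = c i * ∑ j ∈ Finset.range k, d j * x i j := by
    intro i; rw [Finset.mul_sum]; congr 1; funext j; ring
  calc ∑ i ∈ Finset.range k, ∑ j ∈ Finset.range k, c i * d j * x i j
      = ∑ i ∈ Finset.range k, c i * (∑ j ∈ Finset.range k, d j * x i j) := by
        exact Finset.sum_congr rfl (fun i _ => step1 i)
    _ = (∑ p ∈ Finset.range k, (c p - c (p+1))
          * (∑ i ∈ Finset.range (p+1), ∑ j ∈ Finset.range k, d j * x i j)) := by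
        rw [abel1 k c (fun i => ∑ j ∈ Finset.range k, d j * x i j), hc]; ring
    _ = ∑ p ∈ Finset.range k, (c p - c (p+1))
          * (∑ j ∈ Finset.range k, d j * (∑ i ∈ Finset.range (p+1), x i j)) := by
        refine Finset.sum_congr rfl (fun p _ => ?_)
        congr 1
        rw [Finset.sum_comm]
        exact Finset.sum_congr rfl (fun j _ => by rw [Finset.mul_sum])
    _ = ∑ p ∈ Finset.range k, (c p - c (p+1))
          * (∑ q ∈ Finset.range k, (d q - d (q+1))
              * (∑ j ∈ Finset.range (q+1), ∑ i ∈ Finset.range (p+1), x i j)) := by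
        refine Finset.sum_congr rfl (fun p _ => ?_)
        congr 1
        rw [abel1 k d (fun j => ∑ i ∈ Finset.range (p+1), x i j), hd]; ring
    _ = ∑ p ∈ Finset.range k, ∑ q ∈ Finset.range k,
          (c p - c (p+1)) * (d q - d (q+1)) * Tsum x p q := by
        refine Finset.sum_congr rfl (fun p _ => ?_)
        rw [Finset.mul_sum]
        refine Finset.sum_congr rfl (fun q _ => ?_)
        rw [Tsum, Finset.sum_comm]; ring

lemma Tsum_diag (p q : ℕ) :
    Tsum (fun i j => if i = j then (1:ℝ) else 0) p q = (min (p+1) (q+1) : ℕ) := by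
  unfold Tsum
  have : ∀ i : ℕ, (∑ j ∈ Finset.range (q+1), if i = j then (1:ℝ) else 0)
      = if i ∈ Finset.range (q+1) then (1:ℝ) else 0 := by
    intro i
    exact Finset.sum_ite_eq (Finset.range (q+1)) i (fun _ => (1:ℝ))
  simp only [this]
  rw [Finset.sum_ite_mem]
  have : Finset.range (p+1) ∩ Finset.range (q+1) = Finset.range (min (p+1) (q+1)) := by
    ext z; simp [Nat.lt_min]
  rw [this]
  simp

lemma diag_collapse (k : ℕ) (c d : ℕ → ℝ) :
    ∑ i ∈ Finset.range k, ∑ j ∈ Finset.range k,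
        c i * d j * (if i = j then (1:ℝ) else 0)
      = ∑ i ∈ Finset.range k, c i * d i := by
  refine Finset.sum_congr rfl (fun i _ => ?_)
  rw [Finset.sum_eq_single i]
  · simp
  · intro j _ hji; simp [Ne.symm hji]
  · intro h; exact absurd ‹i ∈ Finset.range k› h

end Abel

section VN

variable {k : ℕ} {c d : ℕ → ℝ} {x : ℕ → ℕ → ℝ}

lemma vn_le (hc : c k = 0) (hd : d k = 0)
    (hcm : ∀ p, c (p+1) ≤ c p) (hdm : ∀ p, d (p+1) ≤ d p)
    (hT : ∀ p q, Tsum x p q ≤ (min (p+1) (q+1) : ℕ)) :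
    ∑ i ∈ Finset.range k, ∑ j ∈ Finset.range k, c i * d j * x i j
      ≤ ∑ i ∈ Finset.range k, c i * d i := by
  rw [abel2 k c d x hc hd, ← diag_collapse k c d,
    abel2 k c d (fun i j => if i = j then (1:ℝ) else 0) hc hd]
  refine Finset.sum_le_sum (fun p _ => Finset.sum_le_sum (fun q _ => ?_))
  rw [Tsum_diag]
  have h1 : 0 ≤ (c p - c (p+1)) * (d q - d (q+1)) :=
    mul_nonneg (by linarith [hcm p]) (by linarith [hdm q])
  exact mul_le_mul_of_nonneg_left (hT p q) h1

lemma vn_eq (hc : c k = 0) (hd : d k = 0)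
    (hcm : ∀ p, c (p+1) ≤ c p) (hdm : ∀ p, d (p+1) ≤ d p)
    (hT : ∀ p q, Tsum x p q ≤ (min (p+1) (q+1) : ℕ))
    (heq : ∑ i ∈ Finset.range k, ∑ j ∈ Finset.range k, c i * d j * x i j
      = ∑ i ∈ Finset.range k, c i * d i) :
    ∀ p ∈ Finset.range k, ∀ q ∈ Finset.range k,
      (c p - c (p+1)) * (d q - d (q+1)) * (((min (p+1) (q+1) : ℕ) : ℝ) - Tsum x p q) = 0 := by
  have e1 := abel2 k c d x hc hd
  have e2 : ∑ i ∈ Finset.range k, c i * d i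
      = ∑ p ∈ Finset.range k, ∑ q ∈ Finset.range k,
        (c p - c (p+1)) * (d q - d (q+1)) * ((min (p+1) (q+1) : ℕ) : ℝ) := by
    rw [← diag_collapse k c d, abel2 k c d (fun i j => if i = j then (1:ℝ) else 0) hc hd]
    refine Finset.sum_congr rfl (fun p _ => Finset.sum_congr rfl (fun q _ => ?_))
    rw [Tsum_diag]
  have key : ∑ p ∈ Finset.range k, ∑ q ∈ Finset.range k,
      (c p - c (p+1)) * (d q - d (q+1)) * (((min (p+1) (q+1) : ℕ) : ℝ) - Tsum x p q) = 0 := by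
    have expand : ∀ p q : ℕ,
        (c p - c (p+1)) * (d q - d (q+1)) * (((min (p+1) (q+1) : ℕ) : ℝ) - Tsum x p q)
        = (c p - c (p+1)) * (d q - d (q+1)) * ((min (p+1) (q+1) : ℕ) : ℝ)
          - (c p - c (p+1)) * (d q - d (q+1)) * Tsum x p q := fun p q => by ring
    simp only [expand]
    have : ∀ p : ℕ, ∑ q ∈ Finset.range k,
        ((c p - c (p+1)) * (d q - d (q+1)) * ((min (p+1) (q+1) : ℕ) : ℝ)
          - (c p - c (p+1)) * (d q - d (q+1)) * Tsum x p q)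
        = (∑ q ∈ Finset.range k, (c p - c (p+1)) * (d q - d (q+1)) * ((min (p+1) (q+1) : ℕ) : ℝ))
          - ∑ q ∈ Finset.range k, (c p - c (p+1)) * (d q - d (q+1)) * Tsum x p q :=
      fun p => Finset.sum_sub_distrib _ _
    simp only [this]
    rw [Finset.sum_sub_distrib, ← e2, ← e1, heq, sub_self]
  have hnn : ∀ p ∈ Finset.range k, 0 ≤ ∑ q ∈ Finset.range k,
      (c p - c (p+1)) * (d q - d (q+1)) * (((min (p+1) (q+1) : ℕ) : ℝ) - Tsum x p q) := by
    intro p _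
    refine Finset.sum_nonneg (fun q _ => ?_)
    refine mul_nonneg (mul_nonneg (by linarith [hcm p]) (by linarith [hdm q])) ?_
    linarith [hT p q]
  have houter := (Finset.sum_eq_zero_iff_of_nonneg hnn).mp key
  intro p hp q hq
  have hinner := (Finset.sum_eq_zero_iff_of_nonneg (fun q _ => by
    refine mul_nonneg (mul_nonneg (by linarith [hcm p]) (by linarith [hdm q])) ?_
    linarith [hT p q])).mp (houter p hp)
  exact hinner q hq

lemma vn_transfer (hc : c k = 0) (hd : d k = 0)
    (hcm : ∀ p, c (p+1) ≤ c p) (hdm : ∀ p, d (p+1) ≤ d p)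
    (hT : ∀ p q, Tsum x p q ≤ (min (p+1) (q+1) : ℕ))
    (heq : ∑ i ∈ Finset.range k, ∑ j ∈ Finset.range k, c i * d j * x i j
      = ∑ i ∈ Finset.range k, c i * d i)
    (c' d' : ℕ → ℝ) (hc' : c' k = 0) (hd' : d' k = 0)
    (hsupp : ∀ p q, (c' p - c' (p+1)) * (d' q - d' (q+1)) ≠ 0 →
      (c p - c (p+1)) * (d q - d (q+1)) ≠ 0) :
    ∑ i ∈ Finset.range k, ∑ j ∈ Finset.range k, c' i * d' j * x i j
      = ∑ i ∈ Finset.range k, c' i * d' i := by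
  have hzero := vn_eq hc hd hcm hdm hT heq
  rw [abel2 k c' d' x hc' hd', ← diag_collapse k c' d',
    abel2 k c' d' (fun i j => if i = j then (1:ℝ) else 0) hc' hd']
  refine Finset.sum_congr rfl (fun p hp => Finset.sum_congr rfl (fun q hq => ?_))
  rw [Tsum_diag]
  by_cases hcd : (c' p - c' (p+1)) * (d' q - d' (q+1)) = 0
  · rw [hcd, zero_mul, zero_mul]
  · have h1 := hsupp p q hcd
    have h2 := hzero p hp q hq
    have h3 : ((min (p+1) (q+1) : ℕ) : ℝ) - Tsum x p q = 0 := by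
      rcases mul_eq_zero.mp h2 with h | h
      · exact absurd h h1
      · exact h
    congr 1
    linarith

end VN

section Mat
open Matrix

def ip {n m : ℕ} (A B : Matrix (Fin n) (Fin m) ℝ) : ℝ := Matrix.trace (Aᵀ * B)

lemma trace_t {n m : ℕ} (A B : Matrix (Fin n) (Fin m) ℝ) :
    Matrix.trace (Bᵀ * A) = Matrix.trace (Aᵀ * B) := by
  rw [← Matrix.trace_transpose (Bᵀ * A), Matrix.transpose_mul, Matrix.transpose_transpose]

lemma ip_comm {n m : ℕ} (A B : Matrix (Fin n) (Fin m) ℝ) : ip A B = ip B A := by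
  unfold ip; exact (trace_t A B).symm

lemma frobSq_eq_ip {n m : ℕ} (A : Matrix (Fin n) (Fin m) ℝ) : frobSq A = ip A A := by
  unfold frobSq ip Matrix.trace
  simp only [Matrix.diag, Matrix.mul_apply, Matrix.transpose_apply, sq]
  rw [Finset.sum_comm]

lemma frobSq_sub {n m : ℕ} (A B : Matrix (Fin n) (Fin m) ℝ) :
    frobSq (A - B) = frobSq A - 2 * ip A B + frobSq B := by
  rw [frobSq_eq_ip, frobSq_eq_ip, frobSq_eq_ip]
  unfold ip
  rw [Matrix.transpose_sub, Matrix.sub_mul, Matrix.mul_sub, Matrix.mul_sub,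
    Matrix.trace_sub, Matrix.trace_sub, Matrix.trace_sub, trace_t A B]
  ring

lemma ip_svd {n m k : ℕ} (U W : Matrix (Fin n) (Fin k) ℝ) (V Z : Matrix (Fin m) (Fin k) ℝ)
    (c d : Fin k → ℝ) :
    ip (U * diagonal c * Vᵀ) (W * diagonal d * Zᵀ)
      = ∑ i, ∑ j, c i * d j * ((Uᵀ * W) i j * (Vᵀ * Z) i j) := by
  unfold ip
  rw [Matrix.transpose_mul, Matrix.transpose_mul, Matrix.transpose_transpose,
    Matrix.diagonal_transpose]
  have assoc1 : V * (diagonal c * Uᵀ) * (W * diagonal d * Zᵀ)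
      = V * (diagonal c * (Uᵀ * W) * diagonal d * Zᵀ) := by
    simp only [Matrix.mul_assoc]
  rw [assoc1, Matrix.trace_mul_comm]
  have assoc2 : diagonal c * (Uᵀ * W) * diagonal d * Zᵀ * V
      = diagonal c * (Uᵀ * W) * diagonal d * (Zᵀ * V) := by
    simp only [Matrix.mul_assoc]
  rw [assoc2]
  unfold Matrix.trace
  rw [show Matrix.diag (diagonal c * (Uᵀ * W) * diagonal d * (Zᵀ * V))
    = fun i => ∑ j, (diagonal c * (Uᵀ * W) * diagonal d) i j * (Zᵀ * V) j i from
      funext (fun i => Matrix.mul_apply)]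
  refine Finset.sum_congr rfl (fun i _ => Finset.sum_congr rfl (fun j _ => ?_))
  rw [Matrix.mul_diagonal, Matrix.diagonal_mul]
  have hZV : (Zᵀ * V) j i = (Vᵀ * Z) i j := by
    rw [Matrix.mul_apply, Matrix.mul_apply]
    exact Finset.sum_congr rfl (fun r _ => by
      rw [Matrix.transpose_apply, Matrix.transpose_apply]; ring)
  rw [hZV]; ring

lemma ip_svd_same {n m k : ℕ} (U : Matrix (Fin n) (Fin k) ℝ) (V : Matrix (Fin m) (Fin k) ℝ)
    (hU : Uᵀ * U = 1) (hV : Vᵀ * V = 1) (c d : Fin k → ℝ) :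
    ip (U * diagonal c * Vᵀ) (U * diagonal d * Vᵀ) = ∑ i, c i * d i := by
  rw [ip_svd, hU, hV]
  refine Finset.sum_congr rfl (fun i _ => ?_)
  rw [Finset.sum_eq_single i]
  · rw [Matrix.one_apply_eq]; ring
  · intro j _ hji
    rw [Matrix.one_apply_ne (Ne.symm hji)]; ring
  · intro h; exact absurd (Finset.mem_univ i) h

lemma row_bound {n k : ℕ} (U W : Matrix (Fin n) (Fin k) ℝ)
    (hU : Uᵀ * U = 1) (hW : Wᵀ * W = 1) (i : Fin k) :
    ∑ j, ((Uᵀ * W) i j)^2 ≤ 1 := by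
  have key : ∑ j, ((Uᵀ * W) i j)^2 = ((Uᵀ * W) * (Uᵀ * W)ᵀ) i i := by
    rw [Matrix.mul_apply]
    exact Finset.sum_congr rfl (fun j _ => by rw [Matrix.transpose_apply, sq])
  have hproj : (Uᵀ * W) * (Uᵀ * W)ᵀ = Uᵀ * (W * Wᵀ) * U := by
    rw [Matrix.transpose_mul, Matrix.transpose_transpose]
    simp only [Matrix.mul_assoc]
  rw [key, hproj]
  set E := (1 : Matrix (Fin n) (Fin n) ℝ) - W * Wᵀ with hE
  have hEsymm : Eᵀ = E := by
    rw [hE, Matrix.transpose_sub, Matrix.transpose_one, Matrix.transpose_mul,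
      Matrix.transpose_transpose]
  have hP : W * Wᵀ * (W * Wᵀ) = W * Wᵀ := by
    calc W * Wᵀ * (W * Wᵀ) = W * (Wᵀ * W * Wᵀ) := by simp only [Matrix.mul_assoc]
      _ = W * Wᵀ := by rw [hW, Matrix.one_mul]
  have hEidem : E * E = E := by
    rw [hE]
    simp only [Matrix.sub_mul, Matrix.mul_sub, Matrix.mul_one, Matrix.one_mul]
    rw [hP]; abel
  have hdiff : Uᵀ * (W * Wᵀ) * U = Uᵀ * U - Uᵀ * E * U := by
    rw [hE]
    simp only [Matrix.sub_mul, Matrix.mul_sub, Matrix.mul_one, Matrix.one_mul]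
    abel
  rw [hdiff, hU]
  have hsq : (E * U)ᵀ * (E * U) = Uᵀ * E * U := by
    rw [Matrix.transpose_mul, hEsymm, Matrix.mul_assoc, ← Matrix.mul_assoc E E U, hEidem,
      ← Matrix.mul_assoc]
  have hnn : 0 ≤ (Uᵀ * E * U) i i := by
    rw [← hsq, Matrix.mul_apply]
    exact Finset.sum_nonneg fun l _ => by rw [Matrix.transpose_apply]; exact mul_self_nonneg _
  rw [Matrix.sub_apply, Matrix.one_apply_eq]
  linarith

lemma col_bound {n k : ℕ} (U W : Matrix (Fin n) (Fin k) ℝ)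
    (hU : Uᵀ * U = 1) (hW : Wᵀ * W = 1) (j : Fin k) :
    ∑ i, ((Uᵀ * W) i j)^2 ≤ 1 := by
  have h := row_bound W U hW hU j
  have he : ∀ i, (Uᵀ * W) i j = (Wᵀ * U) j i := by
    intro i
    rw [Matrix.mul_apply, Matrix.mul_apply]
    exact Finset.sum_congr rfl (fun r _ => by
      rw [Matrix.transpose_apply, Matrix.transpose_apply]; ring)
  calc ∑ i, ((Uᵀ * W) i j)^2 = ∑ i, ((Wᵀ * U) j i)^2 :=
        Finset.sum_congr rfl (fun i _ => by rw [he i])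
    _ ≤ 1 := h

end Mat

section Ext

def extv {kk : ℕ} (f : Fin kk → ℝ) : ℕ → ℝ := fun i => if h : i < kk then f ⟨i, h⟩ else 0

def extM {kk : ℕ} (X : Fin kk → Fin kk → ℝ) : ℕ → ℕ → ℝ :=
  fun i j => if h : i < kk ∧ j < kk then X ⟨i, h.1⟩ ⟨j, h.2⟩ else 0

lemma extv_top {kk : ℕ} (f : Fin kk → ℝ) : extv f kk = 0 := by
  simp [extv]

lemma extv_mono {kk : ℕ} (f : Fin kk → ℝ) (hf : Antitone f) (hf0 : ∀ i, 0 ≤ f i) (p : ℕ) :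
    extv f (p+1) ≤ extv f p := by
  unfold extv
  by_cases h1 : p + 1 < kk
  · have h0 : p < kk := Nat.lt_of_succ_lt h1
    rw [dif_pos h1, dif_pos h0]
    exact hf (by simp [Fin.le_def])
  · rw [dif_neg h1]
    by_cases h0 : p < kk
    · rw [dif_pos h0]; exact hf0 _
    · rw [dif_neg h0]

lemma fin_double {kk : ℕ} (f g : Fin kk → ℝ) (X : Fin kk → Fin kk → ℝ) :
    ∑ i : Fin kk, ∑ j : Fin kk, f i * g j * X i j
      = ∑ i ∈ Finset.range kk, ∑ j ∈ Finset.range kk, extv f i * extv g j * extM X i j := by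
  rw [← Fin.sum_univ_eq_sum_range (fun i => ∑ j ∈ Finset.range kk,
    extv f i * extv g j * extM X i j) kk]
  refine Finset.sum_congr rfl (fun i _ => ?_)
  rw [← Fin.sum_univ_eq_sum_range (fun j => extv f ↑i * extv g j * extM X ↑i j) kk]
  refine Finset.sum_congr rfl (fun j _ => ?_)
  simp [extv, extM, i.isLt, j.isLt]

lemma fin_single {kk : ℕ} (f g : Fin kk → ℝ) :
    ∑ i : Fin kk, f i * g i = ∑ i ∈ Finset.range kk, extv f i * extv g i := by
  rw [← Fin.sum_univ_eq_sum_range (fun i => extv f i * extv g i) kk]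
  refine Finset.sum_congr rfl (fun i _ => ?_)
  simp [extv, i.isLt]

lemma ext_sq_bound {kk : ℕ} (a : Fin kk → Fin kk → ℝ)
    (hrow : ∀ i, ∑ j, (a i j)^2 ≤ 1) (p q : ℕ) :
    ∑ i ∈ Finset.range (p+1), ∑ j ∈ Finset.range (q+1), (extM a i j)^2 ≤ (p:ℝ)+1 := by
  have hr : ∀ i : ℕ, ∑ j ∈ Finset.range (q+1), (extM a i j)^2 ≤ 1 := by
    intro i
    by_cases hi : i < kk
    · have h1 : ∑ j ∈ Finset.range (q+1), (extM a i j)^2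
          ≤ ∑ j ∈ Finset.range (max (q+1) kk), (extM a i j)^2 := by
        apply Finset.sum_le_sum_of_subset_of_nonneg
        · exact Finset.range_subset_range.mpr (le_max_left _ _)
        · intro j _ _; positivity
      have h2 : ∑ j ∈ Finset.range (max (q+1) kk), (extM a i j)^2
          = ∑ j ∈ Finset.range kk, (extM a i j)^2 := by
        symm
        apply Finset.sum_subset (Finset.range_subset_range.mpr (le_max_right _ _))
        intro j _ hj
        rw [Finset.mem_range] at hj
        push_neg at hj
        have : ¬ (i < kk ∧ j < kk) := fun hc => absurd hc.2 (by omega)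
        simp [extM, this]
      have h3 : ∑ j ∈ Finset.range kk, (extM a i j)^2 = ∑ j : Fin kk, (a ⟨i, hi⟩ j)^2 := by
        rw [← Fin.sum_univ_eq_sum_range (fun j => (extM a i j)^2) kk]
        refine Finset.sum_congr rfl (fun j _ => ?_)
        simp [extM, hi, j.isLt]
      calc ∑ j ∈ Finset.range (q+1), (extM a i j)^2 ≤ _ := h1
        _ = _ := h2
        _ = _ := h3
        _ ≤ 1 := hrow ⟨i, hi⟩
    · have : ∀ j ∈ Finset.range (q+1), (extM a i j)^2 = 0 := by
        intro j _
        have : ¬ (i < kk ∧ j < kk) := fun hc => absurd hc.1 hi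
        simp [extM, this]
      rw [Finset.sum_eq_zero this]
      norm_num
  calc ∑ i ∈ Finset.range (p+1), ∑ j ∈ Finset.range (q+1), (extM a i j)^2
      ≤ ∑ _i ∈ Finset.range (p+1), (1:ℝ) := Finset.sum_le_sum (fun i _ => hr i)
    _ = (p:ℝ)+1 := by simp

lemma ext_sq_bound_col {kk : ℕ} (a : Fin kk → Fin kk → ℝ)
    (hcol : ∀ j, ∑ i, (a i j)^2 ≤ 1) (p q : ℕ) :
    ∑ i ∈ Finset.range (p+1), ∑ j ∈ Finset.range (q+1), (extM a i j)^2 ≤ (q:ℝ)+1 := by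
  rw [Finset.sum_comm]
  have := ext_sq_bound (fun i j => a j i) hcol q p
  calc ∑ j ∈ Finset.range (q+1), ∑ i ∈ Finset.range (p+1), (extM a i j)^2
      = ∑ j ∈ Finset.range (q+1), ∑ i ∈ Finset.range (p+1), (extM (fun i j => a j i) j i)^2 := by
        refine Finset.sum_congr rfl (fun j _ => Finset.sum_congr rfl (fun i _ => ?_))
        unfold extM
        by_cases h : i < kk ∧ j < kk
        · rw [dif_pos h, dif_pos ⟨h.2, h.1⟩]
        · rw [dif_neg h, dif_neg (fun hc => h ⟨hc.2, hc.1⟩)]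
    _ ≤ (q:ℝ)+1 := this

lemma sum_half {ι : Type*} (s : Finset ι) (x y : ι → ℝ) :
    ∑ j ∈ s, (x j + y j)/2 = (∑ j ∈ s, x j)/2 + (∑ j ∈ s, y j)/2 := by
  rw [Finset.sum_div, Finset.sum_div, ← Finset.sum_add_distrib]
  exact Finset.sum_congr rfl fun j _ => by ring

lemma Tsum_prod_bound {kk : ℕ} (a b : Fin kk → Fin kk → ℝ)
    (hrow_a : ∀ i, ∑ j, (a i j)^2 ≤ 1) (hcol_a : ∀ j, ∑ i, (a i j)^2 ≤ 1)
    (hrow_b : ∀ i, ∑ j, (b i j)^2 ≤ 1) (hcol_b : ∀ j, ∑ i, (b i j)^2 ≤ 1)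
    (p q : ℕ) :
    Tsum (extM (fun i j => a i j * b i j)) p q ≤ (min (p+1) (q+1) : ℕ) := by
  have hpt : ∀ i j : ℕ, extM (fun i j => a i j * b i j) i j
      ≤ ((extM a i j)^2 + (extM b i j)^2)/2 := by
    intro i j
    unfold extM
    by_cases h : i < kk ∧ j < kk
    · rw [dif_pos h, dif_pos h, dif_pos h]
      nlinarith [sq_nonneg (a ⟨i, h.1⟩ ⟨j, h.2⟩ - b ⟨i, h.1⟩ ⟨j, h.2⟩)]
    · rw [dif_neg h, dif_neg h, dif_neg h]
      norm_num
  have step1 : Tsum (extM (fun i j => a i j * b i j)) p q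
      ≤ (∑ i ∈ Finset.range (p+1), ∑ j ∈ Finset.range (q+1), (extM a i j)^2)/2
        + (∑ i ∈ Finset.range (p+1), ∑ j ∈ Finset.range (q+1), (extM b i j)^2)/2 := by
    unfold Tsum
    have : ∀ i ∈ Finset.range (p+1), ∑ j ∈ Finset.range (q+1),
        extM (fun i j => a i j * b i j) i j
        ≤ ∑ j ∈ Finset.range (q+1), ((extM a i j)^2 + (extM b i j)^2)/2 :=
      fun i _ => Finset.sum_le_sum (fun j _ => hpt i j)
    calc ∑ i ∈ Finset.range (p+1), ∑ j ∈ Finset.range (q+1),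
          extM (fun i j => a i j * b i j) i j
        ≤ ∑ i ∈ Finset.range (p+1), ∑ j ∈ Finset.range (q+1),
            ((extM a i j)^2 + (extM b i j)^2)/2 := Finset.sum_le_sum this
      _ = ∑ i ∈ Finset.range (p+1), ((∑ j ∈ Finset.range (q+1), (extM a i j)^2)
            + ∑ j ∈ Finset.range (q+1), (extM b i j)^2)/2 := by
          refine Finset.sum_congr rfl (fun i _ => ?_)
          rw [← Finset.sum_add_distrib, ← Finset.sum_div]
      _ = (∑ i ∈ Finset.range (p+1), ∑ j ∈ Finset.range (q+1), (extM a i j)^2)/2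
          + (∑ i ∈ Finset.range (p+1), ∑ j ∈ Finset.range (q+1), (extM b i j)^2)/2 := by
          rw [sum_half]
  have hmin : ((min (p+1) (q+1) : ℕ) : ℝ) = min ((p:ℝ)+1) ((q:ℝ)+1) := by
    push_cast [Nat.cast_min]; ring_nf
  rw [hmin]
  rcases le_total (p:ℝ) (q:ℝ) with h | h
  · rw [min_eq_left (by linarith)]
    have b1 := ext_sq_bound a hrow_a p q
    have b2 := ext_sq_bound b hrow_b p q
    linarith
  · rw [min_eq_right (by linarith)]
    have b1 := ext_sq_bound_col a hcol_a p q
    have b2 := ext_sq_bound_col b hcol_b p q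
    linarith

end Ext

lemma frobSq_eq_zero {n m : ℕ} (X : Matrix (Fin n) (Fin m) ℝ) (h : frobSq X = 0) : X = 0 := by
  ext l r
  have h2 := (Finset.sum_eq_zero_iff_of_nonneg
    (fun l' (_ : l' ∈ Finset.univ) =>
      Finset.sum_nonneg (fun r' _ => sq_nonneg (X l' r')))).mp h
  have h3 := (Finset.sum_eq_zero_iff_of_nonneg
    (fun r' (_ : r' ∈ Finset.univ) => sq_nonneg (X l r'))).mp (h2 l (Finset.mem_univ l))
  have h4 := h3 r (Finset.mem_univ r)
  rw [Matrix.zero_apply]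
  exact pow_eq_zero_iff two_ne_zero |>.mp h4

/-- Uniqueness: under the hypotheses of the matrix-thresholding optimality result, the
matrix thresholding `B̂ = Θ^σ(Y;λ) = U diag(Θ(σ_i;λ)) Vᵀ` is the UNIQUE global minimizer of
`F(B) = ‖Y−B‖_F²/2 + ∑_i P(σ_i(B);λ)`: any matrix `B` (with singular values `σB` coming
from an SVD of `B`) whose objective value is no larger than that of every matrix must
coincide with `B̂`. -/
theorem matrix_thresholding_unique_minimizer {n m : ℕ}
    (Θ : ℝ → ℝ → ℝ) (hΘ : IsThresholdFunction Θ) (lam : ℝ) (hlam : 0 ≤ lam)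
    (P q : ℝ → ℝ)
    (hq : ∀ θ : ℝ, 0 ≤ q θ) (hqΘ : ∀ t : ℝ, q (Θ t lam) = 0)
    (hP : ∀ θ : ℝ,
      P θ - P 0 = (∫ u in (0:ℝ)..|θ|, (sSup {s : ℝ | Θ s lam ≤ u} - u)) + q θ)
    (Y : Matrix (Fin n) (Fin m) ℝ)
    (U : Matrix (Fin n) (Fin (min n m)) ℝ) (σ : Fin (min n m) → ℝ)
    (V : Matrix (Fin m) (Fin (min n m)) ℝ)
    (hY : IsSVD Y U σ V)
    (hcont : ∀ i, ContinuousAt (fun s => Θ s lam) (σ i))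
    (B : Matrix (Fin n) (Fin m) ℝ)
    (UB : Matrix (Fin n) (Fin (min n m)) ℝ) (σB : Fin (min n m) → ℝ)
    (VB : Matrix (Fin m) (Fin (min n m)) ℝ)
    (hB : IsSVD B UB σB VB)
    (hmin : ∀ (B' : Matrix (Fin n) (Fin m) ℝ)
      (UB' : Matrix (Fin n) (Fin (min n m)) ℝ) (σB' : Fin (min n m) → ℝ)
      (VB' : Matrix (Fin m) (Fin (min n m)) ℝ), IsSVD B' UB' σB' VB' →
      frobSq (Y - B) / 2 + ∑ i, P (σB i) ≤ frobSq (Y - B') / 2 + ∑ i, P (σB' i)) :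
    B = U * diagonal (fun i => Θ (σ i) lam) * Vᵀ := by
  obtain ⟨hodd, hmonoΘ, htopΘ, hbdd⟩ := hΘ lam hlam
  have hzero : Θ 0 lam = 0 := by
    have h := hodd 0; rw [neg_zero] at h; linarith
  obtain ⟨hYU, hYV, hYanti, hYnn, hYeq⟩ := hY
  obtain ⟨hBU, hBV, hBanti, hBnn, hBeq⟩ := hB
  set θ : Fin (min n m) → ℝ := fun i => Θ (σ i) lam with hθ
  have hθanti : Antitone θ := fun i j hij => hmonoΘ (hYanti hij)
  have hθnn : ∀ i, 0 ≤ θ i := fun i => (hbdd (σ i) (hYnn i)).1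
  have hθle : ∀ i, θ i ≤ σ i := fun i => (hbdd (σ i) (hYnn i)).2
  have hBhatSVD : IsSVD (U * diagonal θ * Vᵀ) U θ V := ⟨hYU, hYV, hθanti, hθnn, rfl⟩
  have hminB := hmin (U * diagonal θ * Vᵀ) U θ V hBhatSVD
  -- inner product computations
  have eY : frobSq Y = ∑ i, σ i * σ i := by
    rw [hYeq, frobSq_eq_ip, ip_svd_same U V hYU hYV]
  have eB : frobSq B = ∑ i, σB i * σB i := by
    rw [hBeq, frobSq_eq_ip, ip_svd_same UB VB hBU hBV]
  have eYB : ip Y B = ∑ i, ∑ j, σ i * σB j * ((Uᵀ * UB) i j * (Vᵀ * VB) i j) := by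
    rw [hYeq, hBeq, ip_svd]
  have eYmB : frobSq (Y - B) = frobSq Y - 2 * ip Y B + frobSq B := frobSq_sub Y B
  have hdg : diagonal σ - diagonal θ = diagonal (fun i => σ i - θ i) := by
    ext i j
    rw [Matrix.sub_apply, Matrix.diagonal_apply, Matrix.diagonal_apply, Matrix.diagonal_apply]
    split <;> simp
  have eYmBhat : frobSq (Y - U * diagonal θ * Vᵀ) = ∑ i, (σ i - θ i) * (σ i - θ i) := by
    have hsub : Y - U * diagonal θ * Vᵀ = U * diagonal (fun i => σ i - θ i) * Vᵀ := by
      rw [hYeq, ← hdg, Matrix.mul_sub, Matrix.sub_mul]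
    rw [hsub, frobSq_eq_ip, ip_svd_same U V hYU hYV]
  have eBhat : frobSq (U * diagonal θ * Vᵀ) = ∑ i, θ i * θ i := by
    rw [frobSq_eq_ip, ip_svd_same U V hYU hYV]
  -- von Neumann bound
  have hTbound : ∀ p q', Tsum (extM (fun i j => (Uᵀ * UB) i j * (Vᵀ * VB) i j)) p q'
      ≤ (min (p+1) (q'+1) : ℕ) := by
    intro p q'
    exact Tsum_prod_bound (Uᵀ * UB) (Vᵀ * VB)
      (row_bound U UB hYU hBU) (col_bound U UB hYU hBU)
      (row_bound V VB hYV hBV) (col_bound V VB hYV hBV) p q'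
  have hVN : ip Y B ≤ ∑ i, σ i * σB i := by
    rw [eYB, fin_double, fin_single]
    exact vn_le (extv_top σ) (extv_top σB) (extv_mono σ hYanti hYnn)
      (extv_mono σB hBanti hBnn) hTbound
  -- scalar comparison
  have hsum_le : ∀ i : Fin (min n m), (θ i - σ i)^2/2 + P (θ i) ≤ (σB i - σ i)^2/2 + P (σB i) :=
    fun i => scalar_le (hmono := hmonoΘ) (htop := htopΘ) (hzero := hzero) (hq := hq)
      (hqΘ := hqΘ) (hP := hP) (hYnn i) (hBnn i) (hθnn i)
  -- sum algebra
  have key1 : frobSq (Y - B)/2 + ∑ i, P (σB i)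
      = (∑ i, σ i * σ i)/2 - ip Y B + (∑ i, σB i * σB i)/2 + ∑ i, P (σB i) := by
    rw [eYmB, eY, eB]; ring
  have key2 : frobSq (Y - U * diagonal θ * Vᵀ)/2 + ∑ i, P (θ i)
      = ∑ i, ((θ i - σ i)^2/2 + P (θ i)) := by
    rw [eYmBhat, Finset.sum_add_distrib, ← Finset.sum_div]
    congr 2
    exact Finset.sum_congr rfl (fun i _ => by ring)
  have key3 : ∑ i, ((σB i - σ i)^2/2 + P (σB i))
      = (∑ i, σ i * σ i)/2 - (∑ i, σ i * σB i) + (∑ i, σB i * σB i)/2 + ∑ i, P (σB i) := by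
    rw [Finset.sum_add_distrib]
    have hterm : ∀ i : Fin (min n m), (σB i - σ i)^2/2
        = (σ i * σ i)/2 - σ i * σB i + (σB i * σB i)/2 := fun i => by ring
    simp only [hterm]
    rw [Finset.sum_add_distrib, Finset.sum_sub_distrib, ← Finset.sum_div, ← Finset.sum_div]
  have c1 : ∑ i, ((θ i - σ i)^2/2 + P (θ i)) ≤ ∑ i, ((σB i - σ i)^2/2 + P (σB i)) :=
    Finset.sum_le_sum (fun i _ => hsum_le i)
  have c2 : ∑ i, ((σB i - σ i)^2/2 + P (σB i)) ≤ frobSq (Y - B)/2 + ∑ i, P (σB i) := by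
    rw [key1, key3]; linarith
  -- all equalities
  have hminB' : frobSq (Y - B)/2 + ∑ i, P (σB i) ≤ ∑ i, ((θ i - σ i)^2/2 + P (θ i)) := by
    rw [← key2]; exact hminB
  have hSGF : ∑ i, ((σB i - σ i)^2/2 + P (σB i)) = ∑ i, ((θ i - σ i)^2/2 + P (θ i)) :=
    le_antisymm (le_trans c2 hminB') c1
  have hVNeq : ip Y B = ∑ i, σ i * σB i := by
    have h1 : frobSq (Y - B)/2 + ∑ i, P (σB i) ≤ ∑ i, ((σB i - σ i)^2/2 + P (σB i)) := by
      rw [hSGF]; exact hminB'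
    linarith [h1, key1, key3, hVN]
  -- termwise equality, σB = θ
  have htermeq := (Finset.sum_eq_sum_iff_of_le (fun i (_ : i ∈ Finset.univ) => hsum_le i)).mp
    hSGF.symm
  have hσBθ : ∀ i, σB i = θ i := by
    intro i
    exact scalar_unique (hmono := hmonoΘ) (htop := htopΘ) (hzero := hzero) (hq := hq)
      (hqΘ := hqΘ) (hP := hP) (hYnn i) (hBnn i) (hθnn i) (hθle i) (hcont i)
      ((htermeq i (Finset.mem_univ i)).symm)
  have hσBfun : σB = θ := funext hσBθ
  rw [hσBfun] at hVNeq eYB hBeq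
  -- equality transfer
  have hVNrange : ∑ i ∈ Finset.range (min n m), ∑ j ∈ Finset.range (min n m),
      extv σ i * extv θ j * extM (fun i j => (Uᵀ * UB) i j * (Vᵀ * VB) i j) i j
      = ∑ i ∈ Finset.range (min n m), extv σ i * extv θ i := by
    rw [← fin_double, ← fin_single, ← eYB, hVNeq]
  have hsupp : ∀ p q', (extv θ p - extv θ (p+1)) * (extv θ q' - extv θ (q'+1)) ≠ 0 →
      (extv σ p - extv σ (p+1)) * (extv θ q' - extv θ (q'+1)) ≠ 0 := by
    intro p q' hne
    have h1 : extv θ p - extv θ (p+1) ≠ 0 := left_ne_zero_of_mul hne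
    have h2 : extv θ q' - extv θ (q'+1) ≠ 0 := right_ne_zero_of_mul hne
    refine mul_ne_zero ?_ h2
    unfold extv at h1 ⊢
    by_cases hp1 : p + 1 < min n m
    · have hp : p < min n m := Nat.lt_of_succ_lt hp1
      rw [dif_pos hp1, dif_pos hp] at h1 ⊢
      intro hc
      apply h1
      rw [sub_eq_zero] at hc ⊢
      rw [hθ]
      exact congrArg (fun t => Θ t lam) hc
    · by_cases hp : p < min n m
      · rw [dif_neg hp1, dif_pos hp] at h1 ⊢
        rw [sub_zero] at h1 ⊢
        have hθpos : 0 < θ ⟨p, hp⟩ := lt_of_le_of_ne (hθnn _) (Ne.symm h1)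
        have := hθle ⟨p, hp⟩
        intro hc; rw [hc] at this; linarith
      · rw [dif_neg hp1, dif_neg hp] at h1
        simp at h1
  have htrans := vn_transfer (extv_top σ) (extv_top θ) (extv_mono σ hYanti hYnn)
    (extv_mono θ hθanti hθnn) hTbound hVNrange (extv θ) (extv θ) (extv_top θ) (extv_top θ)
    hsupp
  -- conclude B = Bhat
  have hipBhatB : ip (U * diagonal θ * Vᵀ) B = ∑ i, θ i * θ i := by
    rw [hBeq, ip_svd, fin_double, htrans, ← fin_single]
  have hBB : frobSq B = ∑ i, θ i * θ i := by rw [eB, hσBfun]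
  have hfz : frobSq (B - U * diagonal θ * Vᵀ) = 0 := by
    rw [frobSq_sub, hBB, eBhat, ip_comm, hipBhatB]; ring
  have hdiff := frobSq_eq_zero _ hfz
  have : B = U * diagonal θ * Vᵀ := sub_eq_zero.mp hdiff
  exact this
end

section
/- (The reduced rank regression estimate is a hard-thresholding fixed point) Suppose X ∈ ℝ^{n×p} (n ≥ p) has full column rank and ‖X‖₂ ≤ 1, and let Y ∈ ℝ^{n×m}. Let H = X(XᵀX)⁻¹Xᵀ and let YᵀHY = V D² Vᵀ be a spectral decomposition with D = diag(d₁,…,d_m), d₁ ≥ d₂ ≥ … ≥ d_m ≥ 0. Given λ > 0, let r = max{i : d_i ≥ λ}, let V_r consist of the first r columns of V, and define the RRR estimate B̂ = (XᵀX)⁻¹XᵀY V_r V_rᵀ. Then B̂ satisfies the fixed-point equation B̂ = Θ_H^σ( B̂ + XᵀY − XᵀX B̂ ; λ ), where Θ_H^σ is the matrix version of the hard-thresholding rule Θ_H(t;λ) = t·1_{|t|≥λ} applied to the singular values. -/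
open Matrix

/-- The spectral norm `‖X‖₂` (largest singular value) of a real matrix. -/
noncomputable def matSpectralNorm {n p : ℕ} (X : Matrix (Fin n) (Fin p) ℝ) : ℝ :=
  ‖LinearMap.toContinuousLinearMap (Matrix.toEuclideanLin X)‖

namespace RRRAux

lemma dot_self_nonneg' {N : ℕ} (x : Fin N → ℝ) : 0 ≤ x ⬝ᵥ x :=
  Finset.sum_nonneg fun i _ => mul_self_nonneg _

lemma eq_zero_of_mulVec' {N K : ℕ} (A : Matrix (Fin N) (Fin K) ℝ)
    (h : ∀ v, A *ᵥ v = 0) : A = 0 := by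
  ext i j
  have := congrFun (h (Pi.single j 1)) i
  simpa [Matrix.mulVec_single] using this

lemma dot_symm' {N : ℕ} (A : Matrix (Fin N) (Fin N) ℝ) (hs : Aᵀ = A) (x y : Fin N → ℝ) :
    x ⬝ᵥ A *ᵥ y = y ⬝ᵥ A *ᵥ x := by
  rw [Matrix.dotProduct_mulVec]
  nth_rewrite 1 [← hs]
  rw [Matrix.vecMul_transpose, dotProduct_comm]

lemma dot_trans {a b : ℕ} (X : Matrix (Fin a) (Fin b) ℝ) (v : Fin b → ℝ) (u : Fin a → ℝ) :
    v ⬝ᵥ (Xᵀ *ᵥ u) = (X *ᵥ v) ⬝ᵥ u := by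
  rw [Matrix.dotProduct_mulVec, Matrix.vecMul_transpose]

lemma dot_CS_plain {N : ℕ} (x y : Fin N → ℝ) : (x ⬝ᵥ y) ^ 2 ≤ (x ⬝ᵥ x) * (y ⬝ᵥ y) := by
  have := Finset.sum_mul_sq_le_sq_mul_sq Finset.univ x y
  simpa only [dotProduct, pow_two] using this

/-- Cauchy–Schwarz for a PSD symmetric bilinear form given by a matrix. -/
lemma dot_CS' {N : ℕ} (A : Matrix (Fin N) (Fin N) ℝ) (hs : Aᵀ = A)
    (hpsd : ∀ v, 0 ≤ v ⬝ᵥ A *ᵥ v) (x y : Fin N → ℝ) :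
    (x ⬝ᵥ A *ᵥ y) ^ 2 ≤ (x ⬝ᵥ A *ᵥ x) * (y ⬝ᵥ A *ᵥ y) := by
  set a := x ⬝ᵥ A *ᵥ x with ha
  set b := y ⬝ᵥ A *ᵥ y with hb
  set c := x ⬝ᵥ A *ᵥ y with hc
  have ha0 : 0 ≤ a := hpsd x
  have hb0 : 0 ≤ b := hpsd y
  have key : ∀ s t : ℝ, 0 ≤ s^2*a + 2*(s*t)*c + t^2*b := by
    intro s t
    have := hpsd (s • x + t • y)
    have e1 : (s • x + t • y) ⬝ᵥ A *ᵥ (s • x + t • y)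
        = s^2*a + 2*(s*t)*c + t^2*b := by
      have hyx : y ⬝ᵥ A *ᵥ x = c := by rw [hc]; exact (dot_symm' A hs x y).symm
      simp [Matrix.mulVec_add, Matrix.mulVec_smul, dotProduct_add,
        add_dotProduct, smul_dotProduct, dotProduct_smul,
        ← ha, ← hb, ← hc, hyx, smul_eq_mul]
      ring
    linarith [e1 ▸ this]
  by_cases hbz : b = 0
  · by_cases hcz : c = 0
    · simp [hcz]; positivity
    · exfalso
      have h1 := key 1 (-(a+1)/(2*c))
      rw [hbz] at h1
      have he : 2*((1:ℝ)*(-(a+1)/(2*c)))*c = -(a+1) := by field_simp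
      rw [he] at h1
      nlinarith
  · have hbpos : 0 < b := lt_of_le_of_ne hb0 (Ne.symm hbz)
    have h1 := key b (-c)
    have h2 : c^2 * b ≤ (a*b) * b := by nlinarith
    exact le_of_mul_le_mul_right h2 hbpos

lemma ker_step {N : ℕ} (A P Q : Matrix (Fin N) (Fin N) ℝ) (c μ : ℝ)
    (hc : 0 < c) (hμ0 : 0 ≤ μ) (hμc : μ < c)
    (hAs : Aᵀ = A) (hApsd : ∀ v, 0 ≤ v ⬝ᵥ A *ᵥ v)
    (hP2 : P * P = P) (hPA : A * P = P * A) (hQA : A * Q = Q * A)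
    (hPcontr : ∀ v, (P *ᵥ v) ⬝ᵥ (P *ᵥ v) ≤ v ⬝ᵥ v)
    (hPlow : ∀ u, P *ᵥ u = u → c * (u ⬝ᵥ u) ≤ u ⬝ᵥ A *ᵥ u)
    (hQhigh : ∀ u, Q *ᵥ u = 0 → u ⬝ᵥ A *ᵥ u ≤ μ * (u ⬝ᵥ u))
    (w : Fin N → ℝ) (hw : Q *ᵥ w = 0) : P *ᵥ w = 0 := by
  have h_up : ∀ u, Q *ᵥ u = 0 → (A *ᵥ u) ⬝ᵥ (A *ᵥ u) ≤ μ ^ 2 * (u ⬝ᵥ u) := by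
    intro u hu
    have hQAu : Q *ᵥ (A *ᵥ u) = 0 := by
      rw [Matrix.mulVec_mulVec, ← hQA, ← Matrix.mulVec_mulVec, hu, Matrix.mulVec_zero]
    have hbid : (A *ᵥ u) ⬝ᵥ (A *ᵥ u) = u ⬝ᵥ A *ᵥ (A *ᵥ u) :=
      (dot_symm' A hAs u (A *ᵥ u)).symm
    have hcs := dot_CS' A hAs hApsd u (A *ᵥ u)
    have h3 := hQhigh (A *ᵥ u) hQAu
    have h4 := hQhigh u hu
    have h5 := hApsd u
    have h6 := hApsd (A *ᵥ u)
    have hb0 : 0 ≤ (A *ᵥ u) ⬝ᵥ (A *ᵥ u) := dot_self_nonneg' _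
    set b := (A *ᵥ u) ⬝ᵥ (A *ᵥ u) with hbdef
    rcases eq_or_lt_of_le hb0 with h0 | hpos
    · rw [← h0]; exact mul_nonneg (sq_nonneg μ) (dot_self_nonneg' u)
    · have e1 : b ^ 2 ≤ (u ⬝ᵥ A *ᵥ u) * (μ * b) := by
        have := mul_le_mul_of_nonneg_left h3 h5
        calc b ^ 2 = (u ⬝ᵥ A *ᵥ (A *ᵥ u)) ^ 2 := by rw [← hbid]
          _ ≤ (u ⬝ᵥ A *ᵥ u) * ((A *ᵥ u) ⬝ᵥ A *ᵥ (A *ᵥ u)) := hcs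
          _ ≤ (u ⬝ᵥ A *ᵥ u) * (μ * b) := this
      have e2 : (u ⬝ᵥ A *ᵥ u) * (μ * b) ≤ (μ * (u ⬝ᵥ u)) * (μ * b) :=
        mul_le_mul_of_nonneg_right h4 (mul_nonneg hμ0 hb0)
      have : b * b ≤ (μ ^ 2 * (u ⬝ᵥ u)) * b := by nlinarith [e1, e2]
      exact le_of_mul_le_mul_right this hpos
  have h_down : ∀ u, P *ᵥ u = u → c ^ 2 * (u ⬝ᵥ u) ≤ (A *ᵥ u) ⬝ᵥ (A *ᵥ u) := by
    intro u hu
    have hlow := hPlow u hu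
    have huu : 0 ≤ u ⬝ᵥ u := dot_self_nonneg' _
    have hb0 : 0 ≤ (A *ᵥ u) ⬝ᵥ (A *ᵥ u) := dot_self_nonneg' _
    rcases eq_or_lt_of_le huu with h0 | hpos
    · rw [← h0, mul_zero]; exact hb0
    · have k1 : (c * (u ⬝ᵥ u)) ^ 2 ≤ (u ⬝ᵥ A *ᵥ u) ^ 2 :=
        pow_le_pow_left₀ (mul_nonneg hc.le huu) hlow 2
      have k2 := dot_CS_plain u (A *ᵥ u)
      have : (c ^ 2 * (u ⬝ᵥ u)) * (u ⬝ᵥ u) ≤ ((A *ᵥ u) ⬝ᵥ (A *ᵥ u)) * (u ⬝ᵥ u) := by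
        nlinarith [k1, k2]
      exact le_of_mul_le_mul_right this hpos
  have hPinv : ∀ u, P *ᵥ u = u → P *ᵥ (A *ᵥ u) = A *ᵥ u := by
    intro u hu
    rw [Matrix.mulVec_mulVec, ← hPA, ← Matrix.mulVec_mulVec, hu]
  have hfQ : ∀ k : ℕ, Q *ᵥ ((A ^ k) *ᵥ w) = 0 := by
    intro k
    induction k with
    | zero => simpa using hw
    | succ k ih =>
      rw [pow_succ', ← Matrix.mulVec_mulVec,
        Matrix.mulVec_mulVec, ← hQA, ← Matrix.mulVec_mulVec, ih, Matrix.mulVec_zero]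
  have hgP : ∀ k : ℕ, P *ᵥ ((A ^ k) *ᵥ (P *ᵥ w)) = (A ^ k) *ᵥ (P *ᵥ w) := by
    intro k
    induction k with
    | zero =>
      simp only [pow_zero, Matrix.one_mulVec]
      rw [Matrix.mulVec_mulVec, hP2]
    | succ k ih =>
      rw [pow_succ', ← Matrix.mulVec_mulVec]
      exact hPinv _ ih
  have hbridge : ∀ k : ℕ, (A ^ k) *ᵥ (P *ᵥ w) = P *ᵥ ((A ^ k) *ᵥ w) := by
    intro k
    have hcomm : A ^ k * P = P * A ^ k := (Commute.pow_left (hPA : Commute A P) k)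
    rw [Matrix.mulVec_mulVec, hcomm, ← Matrix.mulVec_mulVec]
  have hupper : ∀ k : ℕ, ((A ^ k) *ᵥ w) ⬝ᵥ ((A ^ k) *ᵥ w) ≤ (μ ^ 2) ^ k * (w ⬝ᵥ w) := by
    intro k
    induction k with
    | zero => simp
    | succ k ih =>
      rw [pow_succ' A k, ← Matrix.mulVec_mulVec]
      calc (A *ᵥ ((A ^ k) *ᵥ w)) ⬝ᵥ (A *ᵥ ((A ^ k) *ᵥ w))
          ≤ μ ^ 2 * (((A ^ k) *ᵥ w) ⬝ᵥ ((A ^ k) *ᵥ w)) := h_up _ (hfQ k)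
        _ ≤ μ ^ 2 * ((μ ^ 2) ^ k * (w ⬝ᵥ w)) := mul_le_mul_of_nonneg_left ih (sq_nonneg μ)
        _ = (μ ^ 2) ^ (k + 1) * (w ⬝ᵥ w) := by ring
  have hlower : ∀ k : ℕ, (c ^ 2) ^ k * ((P *ᵥ w) ⬝ᵥ (P *ᵥ w))
      ≤ ((A ^ k) *ᵥ (P *ᵥ w)) ⬝ᵥ ((A ^ k) *ᵥ (P *ᵥ w)) := by
    intro k
    induction k with
    | zero => simp
    | succ k ih =>
      rw [pow_succ' A k, ← Matrix.mulVec_mulVec]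
      calc (c ^ 2) ^ (k + 1) * ((P *ᵥ w) ⬝ᵥ (P *ᵥ w))
          = c ^ 2 * ((c ^ 2) ^ k * ((P *ᵥ w) ⬝ᵥ (P *ᵥ w))) := by ring
        _ ≤ c ^ 2 * (((A ^ k) *ᵥ (P *ᵥ w)) ⬝ᵥ ((A ^ k) *ᵥ (P *ᵥ w))) :=
            mul_le_mul_of_nonneg_left ih (sq_nonneg c)
        _ ≤ (A *ᵥ ((A ^ k) *ᵥ (P *ᵥ w))) ⬝ᵥ (A *ᵥ ((A ^ k) *ᵥ (P *ᵥ w))) :=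
            h_down _ (hgP k)
  have hmain : ∀ k : ℕ, (c ^ 2) ^ k * ((P *ᵥ w) ⬝ᵥ (P *ᵥ w)) ≤ (μ ^ 2) ^ k * (w ⬝ᵥ w) := by
    intro k
    calc (c ^ 2) ^ k * ((P *ᵥ w) ⬝ᵥ (P *ᵥ w))
        ≤ ((A ^ k) *ᵥ (P *ᵥ w)) ⬝ᵥ ((A ^ k) *ᵥ (P *ᵥ w)) := hlower k
      _ = (P *ᵥ ((A ^ k) *ᵥ w)) ⬝ᵥ (P *ᵥ ((A ^ k) *ᵥ w)) := by rw [hbridge]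
      _ ≤ ((A ^ k) *ᵥ w) ⬝ᵥ ((A ^ k) *ᵥ w) := hPcontr _
      _ ≤ (μ ^ 2) ^ k * (w ⬝ᵥ w) := hupper k
  have he0 : 0 ≤ (P *ᵥ w) ⬝ᵥ (P *ᵥ w) := dot_self_nonneg' _
  have hW0 : 0 ≤ w ⬝ᵥ w := dot_self_nonneg' _
  have hez : (P *ᵥ w) ⬝ᵥ (P *ᵥ w) = 0 := by
    by_contra hne
    have hepos : 0 < (P *ᵥ w) ⬝ᵥ (P *ᵥ w) := lt_of_le_of_ne he0 (Ne.symm hne)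
    rcases eq_or_lt_of_le hW0 with h0 | hWpos
    · have h00 := hmain 0
      simp only [pow_zero, one_mul] at h00
      rw [← h0] at h00
      linarith
    · have hr1 : μ ^ 2 / c ^ 2 < 1 := by
        rw [div_lt_one (by positivity)]
        nlinarith
      obtain ⟨k, hk⟩ := exists_pow_lt_of_lt_one (div_pos hepos hWpos) hr1
      rw [div_pow] at hk
      rw [div_lt_div_iff₀ (by positivity) hWpos] at hk
      have := hmain k
      nlinarith [hk, this]
  rwa [dotProduct_self_eq_zero] at hez

lemma proj_unique {N : ℕ} (A P Q : Matrix (Fin N) (Fin N) ℝ) (c μP μQ : ℝ)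
    (hc : 0 < c) (hμP0 : 0 ≤ μP) (hμPc : μP < c) (hμQ0 : 0 ≤ μQ) (hμQc : μQ < c)
    (hAs : Aᵀ = A) (hApsd : ∀ v, 0 ≤ v ⬝ᵥ A *ᵥ v)
    (hPs : Pᵀ = P) (hP2 : P * P = P) (hPA : A * P = P * A)
    (hQs : Qᵀ = Q) (hQ2 : Q * Q = Q) (hQA : A * Q = Q * A)
    (hPlow : ∀ u, P *ᵥ u = u → c * (u ⬝ᵥ u) ≤ u ⬝ᵥ A *ᵥ u)
    (hPhigh : ∀ u, P *ᵥ u = 0 → u ⬝ᵥ A *ᵥ u ≤ μP * (u ⬝ᵥ u))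
    (hQlow : ∀ u, Q *ᵥ u = u → c * (u ⬝ᵥ u) ≤ u ⬝ᵥ A *ᵥ u)
    (hQhigh : ∀ u, Q *ᵥ u = 0 → u ⬝ᵥ A *ᵥ u ≤ μQ * (u ⬝ᵥ u)) :
    P = Q := by
  have contr : ∀ (R : Matrix (Fin N) (Fin N) ℝ), Rᵀ = R → R * R = R →
      ∀ v, (R *ᵥ v) ⬝ᵥ (R *ᵥ v) ≤ v ⬝ᵥ v := by
    intro R hRs hR2 v
    have h1 : (R *ᵥ v) ⬝ᵥ (R *ᵥ v) = v ⬝ᵥ R *ᵥ v := by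
      rw [← dot_symm' R hRs v (R *ᵥ v), Matrix.mulVec_mulVec, hR2]
    have h2 : 0 ≤ (v - R *ᵥ v) ⬝ᵥ (v - R *ᵥ v) := dot_self_nonneg' _
    have h3 : (v - R *ᵥ v) ⬝ᵥ (v - R *ᵥ v)
        = v ⬝ᵥ v - 2 * (v ⬝ᵥ R *ᵥ v) + (R *ᵥ v) ⬝ᵥ (R *ᵥ v) := by
      rw [sub_dotProduct, dotProduct_sub, dotProduct_sub,
        dotProduct_comm (R *ᵥ v) v]
      ring
    rw [h1] at h3
    rw [h1]
    linarith
  have step1 : ∀ w, Q *ᵥ w = 0 → P *ᵥ w = 0 := fun w hw =>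
    ker_step A P Q c μQ hc hμQ0 hμQc hAs hApsd hP2 hPA hQA (contr P hPs hP2) hPlow hQhigh w hw
  have step2 : ∀ w, P *ᵥ w = 0 → Q *ᵥ w = 0 := fun w hw =>
    ker_step A Q P c μP hc hμP0 hμPc hAs hApsd hQ2 hQA hPA (contr Q hQs hQ2) hQlow hPhigh w hw
  have absorb : ∀ (R T : Matrix (Fin N) (Fin N) ℝ), T * T = T →
      (∀ w, T *ᵥ w = 0 → R *ᵥ w = 0) → R = R * T := by
    intro R T hT2 hstep
    have : R - R * T = 0 := by
      apply eq_zero_of_mulVec'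
      intro v
      have hqw : T *ᵥ (v - T *ᵥ v) = 0 := by
        rw [Matrix.mulVec_sub, Matrix.mulVec_mulVec, hT2, sub_self]
      have h := hstep _ hqw
      rw [Matrix.mulVec_sub, Matrix.mulVec_mulVec] at h
      rw [Matrix.sub_mulVec]
      exact h
    exact (sub_eq_zero.mp this)
  have hPQ : P = P * Q := absorb P Q hQ2 step1
  have hQP : Q = Q * P := absorb Q P hP2 step2
  have h1 : (Q * P)ᵀ = P * Q := by rw [Matrix.transpose_mul, hPs, hQs]
  rw [hPQ, ← h1, ← hQP, hQs]

/-- quadratic form of `W * diagonal a * Wᵀ`. -/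
lemma qform {N K : ℕ} (W : Matrix (Fin N) (Fin K) ℝ) (a : Fin K → ℝ) (u : Fin N → ℝ) :
    u ⬝ᵥ (W * diagonal a * Wᵀ) *ᵥ u = ∑ i, a i * ((Wᵀ *ᵥ u) i) ^ 2 := by
  have h1 : (W * diagonal a * Wᵀ) *ᵥ u = W *ᵥ (diagonal a *ᵥ (Wᵀ *ᵥ u)) := by
    rw [Matrix.mulVec_mulVec, Matrix.mulVec_mulVec]
  rw [h1]
  have h2 : u ⬝ᵥ W *ᵥ (diagonal a *ᵥ (Wᵀ *ᵥ u))
      = (Wᵀ *ᵥ u) ⬝ᵥ (diagonal a *ᵥ (Wᵀ *ᵥ u)) := by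
    nth_rewrite 1 [show W = (Wᵀ)ᵀ from (Matrix.transpose_transpose W).symm]
    rw [dot_trans]
  rw [h2]
  simp only [dotProduct, Matrix.mulVec_diagonal]
  exact Finset.sum_congr rfl fun i _ => by ring

lemma dot_conj {a b : ℕ} (K : Matrix (Fin a) (Fin b) ℝ) (W : Matrix (Fin a) (Fin a) ℝ)
    (u : Fin b → ℝ) :
    (K *ᵥ u) ⬝ᵥ (W *ᵥ (K *ᵥ u)) = u ⬝ᵥ (Kᵀ * (W * K)) *ᵥ u := by
  have h : (Kᵀ * (W * K)) *ᵥ u = Kᵀ *ᵥ (W *ᵥ (K *ᵥ u)) := by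
    rw [← Matrix.mulVec_mulVec, ← Matrix.mulVec_mulVec]
  rw [h, dot_trans]

lemma dotsq {N : ℕ} (x : Fin N → ℝ) : x ⬝ᵥ x = ∑ i, (x i) ^ 2 := by
  simp [dotProduct, pow_two]

lemma dot_gram {a b : ℕ} (K : Matrix (Fin a) (Fin b) ℝ) (u : Fin b → ℝ) :
    u ⬝ᵥ (Kᵀ * K) *ᵥ u = (K *ᵥ u) ⬝ᵥ (K *ᵥ u) := by
  rw [← Matrix.mulVec_mulVec, dot_trans]

/-- right-associated version of `qform`. -/
lemma qform' {N K : ℕ} (W : Matrix (Fin N) (Fin K) ℝ) (a : Fin K → ℝ) (u : Fin N → ℝ) :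
    u ⬝ᵥ (W * (diagonal a * Wᵀ)) *ᵥ u = ∑ i, a i * ((Wᵀ *ᵥ u) i) ^ 2 := by
  rw [← Matrix.mul_assoc]
  exact qform W a u

lemma proj_form_le {N : ℕ} (R : Matrix (Fin N) (Fin N) ℝ) (hRs : Rᵀ = R)
    (hR2 : R * R = R) (v : Fin N → ℝ) : v ⬝ᵥ R *ᵥ v ≤ v ⬝ᵥ v := by
  have h1 : (R *ᵥ v) ⬝ᵥ (R *ᵥ v) = v ⬝ᵥ R *ᵥ v := by
    rw [← dot_symm' R hRs v (R *ᵥ v), Matrix.mulVec_mulVec, hR2]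
  have h2 : 0 ≤ (v - R *ᵥ v) ⬝ᵥ (v - R *ᵥ v) := dot_self_nonneg' _
  have h3 : (v - R *ᵥ v) ⬝ᵥ (v - R *ᵥ v)
      = v ⬝ᵥ v - 2 * (v ⬝ᵥ R *ᵥ v) + (R *ᵥ v) ⬝ᵥ (R *ᵥ v) := by
    rw [sub_dotProduct, dotProduct_sub, dotProduct_sub,
      dotProduct_comm (R *ᵥ v) v]
    ring
  rw [h1] at h3
  linarith

end RRRAux

set_option maxHeartbeats 2000000 in
open RRRAux in
/-- The reduced rank regression estimate is a hard-thresholding fixed point: with `X` of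
full column rank, `‖X‖₂ ≤ 1`, spectral decomposition `YᵀHY = V D² Vᵀ` (`H` the hat matrix,
`d` nonincreasing and nonnegative), `λ > 0`, and the RRR estimate
`B̂ = (XᵀX)⁻¹XᵀY V_r V_rᵀ` (where `V_r V_rᵀ = V diag(1_{d_i ≥ λ}) Vᵀ` selects the
eigendirections with `d_i ≥ λ`), the estimate `B̂` satisfies
`B̂ = Θ_H^σ(B̂ + XᵀY − XᵀX B̂; λ)` — computed through any SVD of the argument, with the
hard-thresholding rule `Θ_H(t;λ) = t·1_{|t| ≥ λ}` applied to the singular values. -/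
theorem rrr_hard_thresholding_fixed_point {n p m : ℕ} (hpn : p ≤ n)
    (X : Matrix (Fin n) (Fin p) ℝ) (hrank : X.rank = p)
    (hXnorm : matSpectralNorm X ≤ 1)
    (Y : Matrix (Fin n) (Fin m) ℝ)
    (V : Matrix (Fin m) (Fin m) ℝ) (hV : Vᵀ * V = 1)
    (d : Fin m → ℝ) (hd : Antitone d) (hd0 : ∀ i, 0 ≤ d i)
    (hspec : Yᵀ * (X * (Xᵀ * X)⁻¹ * Xᵀ) * Y = V * diagonal (fun i => d i ^ 2) * Vᵀ)
    (lam : ℝ) (hlam : 0 < lam)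
    (Bhat : Matrix (Fin p) (Fin m) ℝ)
    (hBhat : Bhat = (Xᵀ * X)⁻¹ * Xᵀ * Y
      * (V * diagonal (fun i => if lam ≤ d i then (1:ℝ) else 0) * Vᵀ)) :
    ∀ (UM : Matrix (Fin p) (Fin (min p m)) ℝ) (σM : Fin (min p m) → ℝ)
      (VM : Matrix (Fin m) (Fin (min p m)) ℝ),
      IsSVD (Bhat + Xᵀ * Y - Xᵀ * X * Bhat) UM σM VM →
      Bhat = UM * diagonal (fun i => if lam ≤ σM i then σM i else 0) * VMᵀ := by
  intro UM σM VM hsvd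
  obtain ⟨hU, hVM, hanti, hσ0, hMsvd⟩ := hsvd
  -- trivial degenerate cases
  by_cases hm : m = 0
  · ext i j; exact absurd j.isLt (by omega)
  by_cases hp : p = 0
  · ext i j; exact absurd i.isLt (by omega)
  have hk : 0 < min p m := by omega
  have : Nonempty (Fin (min p m)) := Fin.pos_iff_nonempty.mp hk
  have : Nonempty (Fin m) := Fin.pos_iff_nonempty.mp (by omega)
  -- the Gram matrix S = XᵀX and its inverse
  have hSunit : IsUnit (Xᵀ * X) := by
    rw [← Matrix.mulVec_surjective_iff_isUnit]
    have hr : (Xᵀ * X).rank = p := by rw [Matrix.rank_transpose_mul_self]; exact hrank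
    have htop : LinearMap.range (Xᵀ * X).mulVecLin = ⊤ := by
      apply Submodule.eq_top_of_finrank_eq
      rw [Matrix.rank] at hr
      rw [hr, Module.finrank_pi]
      simp
    intro v
    have : v ∈ LinearMap.range (Xᵀ * X).mulVecLin := htop ▸ Submodule.mem_top
    obtain ⟨w, hw⟩ := this
    exact ⟨w, hw⟩
  have hSdet : IsUnit (Xᵀ * X).det := (Matrix.isUnit_iff_isUnit_det _).mp hSunit
  have hS_inv : (Xᵀ * X) * (Xᵀ * X)⁻¹ = 1 := Matrix.mul_nonsing_inv _ hSdet
  have hS_inv' : (Xᵀ * X)⁻¹ * (Xᵀ * X) = 1 := Matrix.nonsing_inv_mul _ hSdet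
  have hSsym : (Xᵀ * X)ᵀ = Xᵀ * X := by
    rw [Matrix.transpose_mul, Matrix.transpose_transpose]
  have hSinvsym : ((Xᵀ * X)⁻¹)ᵀ = (Xᵀ * X)⁻¹ := by
    rw [Matrix.transpose_nonsing_inv, hSsym]
  -- quadratic form bounds coming from ‖X‖₂ ≤ 1
  have hXform : ∀ v : Fin p → ℝ, (X *ᵥ v) ⬝ᵥ (X *ᵥ v) ≤ v ⬝ᵥ v := by
    intro v
    have hnorm : ∀ (N : ℕ) (u : Fin N → ℝ),
        ‖(WithLp.equiv 2 (Fin N → ℝ)).symm u‖ ^ 2 = u ⬝ᵥ u := by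
      intro N u
      rw [EuclideanSpace.norm_eq, Real.sq_sqrt (by positivity)]
      simp [dotProduct, Real.norm_eq_abs, sq_abs, pow_two]
    have h1 : ‖LinearMap.toContinuousLinearMap (Matrix.toEuclideanLin X)
        ((WithLp.equiv 2 (Fin p → ℝ)).symm v)‖
        ≤ 1 * ‖(WithLp.equiv 2 (Fin p → ℝ)).symm v‖ := by
      calc ‖LinearMap.toContinuousLinearMap (Matrix.toEuclideanLin X)
            ((WithLp.equiv 2 (Fin p → ℝ)).symm v)‖
          ≤ ‖LinearMap.toContinuousLinearMap (Matrix.toEuclideanLin X)‖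
            * ‖(WithLp.equiv 2 (Fin p → ℝ)).symm v‖ :=
            ContinuousLinearMap.le_opNorm _ _
        _ ≤ 1 * ‖(WithLp.equiv 2 (Fin p → ℝ)).symm v‖ := by
            apply mul_le_mul_of_nonneg_right hXnorm (norm_nonneg _)
    rw [one_mul] at h1
    have h2 : LinearMap.toContinuousLinearMap (Matrix.toEuclideanLin X)
        ((WithLp.equiv 2 (Fin p → ℝ)).symm v)
        = (WithLp.equiv 2 (Fin n → ℝ)).symm (X *ᵥ v) := by
      simp [Matrix.toEuclideanLin_apply_piLp_toLp]
    rw [h2] at h1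
    have h3 := pow_le_pow_left₀ (norm_nonneg _) h1 2
    rw [hnorm n (X *ᵥ v), hnorm p v] at h3
    exact h3
  have hSpsd : ∀ v, 0 ≤ v ⬝ᵥ (Xᵀ * X) *ᵥ v := by
    intro v
    rw [← Matrix.mulVec_mulVec, dot_trans]
    exact dot_self_nonneg' _
  have hSform : ∀ v, v ⬝ᵥ (Xᵀ * X) *ᵥ v ≤ v ⬝ᵥ v := by
    intro v
    rw [← Matrix.mulVec_mulVec, dot_trans]
    exact hXform v
  -- (XᵀX)⁻¹ ⪰ I and ‖(XᵀX)⁻¹ u‖² ≥ uᵀ(XᵀX)⁻¹u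
  have hSinv_ge : ∀ u, u ⬝ᵥ u ≤ u ⬝ᵥ (Xᵀ * X)⁻¹ *ᵥ u := by
    intro u
    set w := (Xᵀ * X)⁻¹ *ᵥ u with hwdef
    have hu : (Xᵀ * X) *ᵥ w = u := by
      rw [hwdef, Matrix.mulVec_mulVec, hS_inv, Matrix.one_mulVec]
    have e1 : u ⬝ᵥ (Xᵀ * X)⁻¹ *ᵥ u = w ⬝ᵥ (Xᵀ * X) *ᵥ w := by
      nth_rewrite 1 [← hu]
      rw [dotProduct_comm]
    have e2 : u ⬝ᵥ u = ((Xᵀ * X) *ᵥ w) ⬝ᵥ ((Xᵀ * X) *ᵥ w) := by rw [hu]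
    rw [e1, e2]
    -- now show ‖Sw‖² ≤ wᵀSw using CS for the form S plus S ⪯ I
    have hb0 : 0 ≤ ((Xᵀ * X) *ᵥ w) ⬝ᵥ ((Xᵀ * X) *ᵥ w) := dot_self_nonneg' _
    have hbid : ((Xᵀ * X) *ᵥ w) ⬝ᵥ ((Xᵀ * X) *ᵥ w)
        = w ⬝ᵥ (Xᵀ * X) *ᵥ ((Xᵀ * X) *ᵥ w) :=
      (dot_symm' (Xᵀ * X) hSsym w ((Xᵀ * X) *ᵥ w)).symm
    have hcs := dot_CS' (Xᵀ * X) hSsym hSpsd w ((Xᵀ * X) *ᵥ w)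
    have ht := hSform ((Xᵀ * X) *ᵥ w)
    have ha0 := hSpsd w
    rcases eq_or_lt_of_le hb0 with h0 | hpos
    · rw [← h0]; exact ha0
    · have : (((Xᵀ * X) *ᵥ w) ⬝ᵥ ((Xᵀ * X) *ᵥ w)) * (((Xᵀ * X) *ᵥ w) ⬝ᵥ ((Xᵀ * X) *ᵥ w))
          ≤ (w ⬝ᵥ (Xᵀ * X) *ᵥ w) * (((Xᵀ * X) *ᵥ w) ⬝ᵥ ((Xᵀ * X) *ᵥ w)) := by
        nlinarith [hcs, ht, hbid, ha0]
      exact le_of_mul_le_mul_right this hpos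
  have hSinv2 : ∀ u, u ⬝ᵥ (Xᵀ * X)⁻¹ *ᵥ u
      ≤ ((Xᵀ * X)⁻¹ *ᵥ u) ⬝ᵥ ((Xᵀ * X)⁻¹ *ᵥ u) := by
    intro u
    have hs0 : 0 ≤ u ⬝ᵥ (Xᵀ * X)⁻¹ *ᵥ u := le_trans (dot_self_nonneg' u) (hSinv_ge u)
    have hr0 : 0 ≤ ((Xᵀ * X)⁻¹ *ᵥ u) ⬝ᵥ ((Xᵀ * X)⁻¹ *ᵥ u) := dot_self_nonneg' _
    rcases eq_or_lt_of_le hs0 with h0 | hpos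
    · rw [← h0]; exact hr0
    · have hcs := dot_CS_plain u ((Xᵀ * X)⁻¹ *ᵥ u)
      have hge := hSinv_ge u
      have : (u ⬝ᵥ (Xᵀ * X)⁻¹ *ᵥ u) * (u ⬝ᵥ (Xᵀ * X)⁻¹ *ᵥ u)
          ≤ (((Xᵀ * X)⁻¹ *ᵥ u) ⬝ᵥ ((Xᵀ * X)⁻¹ *ᵥ u)) * (u ⬝ᵥ (Xᵀ * X)⁻¹ *ᵥ u) := by
        nlinarith [hcs, hge, hr0]
      exact le_of_mul_le_mul_right this hpos
  -- abbreviations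
  set f : Fin m → ℝ := fun i => if lam ≤ d i then (1:ℝ) else 0 with hfdef
  set g : Fin m → ℝ := fun i => if lam ≤ d i then (0:ℝ) else 1 with hgdef
  set Qm : Matrix (Fin m) (Fin m) ℝ := V * diagonal f * Vᵀ with hQmdef
  set Qc : Matrix (Fin m) (Fin m) ℝ := V * diagonal g * Vᵀ with hQcdef
  set Cm : Matrix (Fin p) (Fin m) ℝ := Xᵀ * Y * Qc with hCmdef
  set M : Matrix (Fin p) (Fin m) ℝ := Bhat + Xᵀ * Y - Xᵀ * X * Bhat with hMdef
  -- trailing-factor helper identities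
  have hVV' : V * Vᵀ = 1 := mul_eq_one_comm.mp hV
  have hVtVZ : ∀ {r : ℕ} (Z : Matrix (Fin m) (Fin r) ℝ), Vᵀ * (V * Z) = Z := by
    intro r Z; rw [← Matrix.mul_assoc, hV, Matrix.one_mul]
  have hVVtZ : ∀ {r : ℕ} (Z : Matrix (Fin m) (Fin r) ℝ), V * (Vᵀ * Z) = Z := by
    intro r Z; rw [← Matrix.mul_assoc, hVV', Matrix.one_mul]
  have hVMtVMZ : ∀ {r : ℕ} (Z : Matrix (Fin (min p m)) (Fin r) ℝ), VMᵀ * (VM * Z) = Z := by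
    intro r Z; rw [← Matrix.mul_assoc, hVM, Matrix.one_mul]
  have hUMtUMZ : ∀ {r : ℕ} (Z : Matrix (Fin (min p m)) (Fin r) ℝ), UMᵀ * (UM * Z) = Z := by
    intro r Z; rw [← Matrix.mul_assoc, hU, Matrix.one_mul]
  have hdiagZ : ∀ (a b : Fin m → ℝ) {r : ℕ} (Z : Matrix (Fin m) (Fin r) ℝ),
      diagonal a * (diagonal b * Z) = diagonal (fun i => a i * b i) * Z := by
    intro a b r Z
    rw [← Matrix.mul_assoc, Matrix.diagonal_mul_diagonal]
  have hdiagZk : ∀ (a b : Fin (min p m) → ℝ) {r : ℕ} (Z : Matrix (Fin (min p m)) (Fin r) ℝ),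
      diagonal a * (diagonal b * Z) = diagonal (fun i => a i * b i) * Z := by
    intro a b r Z
    rw [← Matrix.mul_assoc, Matrix.diagonal_mul_diagonal]
  have hXSZ : ∀ {r : ℕ} (Z : Matrix (Fin p) (Fin r) ℝ),
      Xᵀ * (X * ((Xᵀ * X)⁻¹ * Z)) = Z := by
    intro r Z
    rw [← Matrix.mul_assoc, ← Matrix.mul_assoc, hS_inv, Matrix.one_mul]
  have hGZ : ∀ {r : ℕ} (Z : Matrix (Fin m) (Fin r) ℝ),
      Yᵀ * (X * ((Xᵀ * X)⁻¹ * (Xᵀ * (Y * Z))))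
      = V * (diagonal (fun i => d i ^ 2) * (Vᵀ * Z)) := by
    intro r Z
    have h := congrArg (fun B => B * Z) hspec
    simpa only [Matrix.mul_assoc] using h
  -- function-level facts
  have hffe : (fun i => f i * f i) = f := by
    funext i; by_cases hi : lam ≤ d i <;> simp [hfdef, hi]
  have hgfe : (fun i => g i * f i) = fun _ => (0:ℝ) := by
    funext i; by_cases hi : lam ≤ d i <;> simp [hfdef, hgdef, hi]
  have hfge : (fun i => f i * g i) = fun _ => (0:ℝ) := by
    funext i; by_cases hi : lam ≤ d i <;> simp [hfdef, hgdef, hi]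
  have hfge1 : (fun i => f i + g i) = fun _ => (1:ℝ) := by
    funext i; by_cases hi : lam ≤ d i <;> simp [hfdef, hgdef, hi]
  -- basic identities for Qm, Qc, Cm
  have hQmsym : Qmᵀ = Qm := by
    rw [hQmdef]
    simp [Matrix.transpose_mul, Matrix.diagonal_transpose, Matrix.mul_assoc]
  have hQm2 : Qm * Qm = Qm := by
    rw [hQmdef]
    simp only [Matrix.mul_assoc, hVtVZ, hdiagZ, hffe]
  have hBQ : Bhat * Qm = Bhat := by
    rw [hBhat, hQmdef]
    simp only [Matrix.mul_assoc, hVtVZ, hdiagZ, hffe]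
  have hCQ : Cm * Qm = 0 := by
    rw [hCmdef, hQcdef, hQmdef]
    simp only [Matrix.mul_assoc, hVtVZ, hdiagZ, hgfe]
    simp [Matrix.diagonal_zero]
  have hQsum : Qm + Qc = 1 := by
    rw [hQmdef, hQcdef, ← Matrix.add_mul, ← Matrix.mul_add, Matrix.diagonal_add, hfge1]
    rw [show Matrix.diagonal (fun _ : Fin m => (1:ℝ)) = (1 : Matrix (Fin m) (Fin m) ℝ) from
      Matrix.diagonal_one]
    rw [Matrix.mul_one, hVV']
  have hXXB : Xᵀ * X * Bhat = Xᵀ * Y * Qm := by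
    rw [hBhat]
    simp only [Matrix.mul_assoc, hXSZ]
  have hMeq : M = Bhat + Cm := by
    rw [hMdef, hXXB, hCmdef]
    have hQc1 : Qc = 1 - Qm := by rw [← hQsum]; abel
    have h2 : Xᵀ * Y * Qc = Xᵀ * Y - Xᵀ * Y * Qm := by
      rw [hQc1, Matrix.mul_sub, Matrix.mul_one]
    rw [h2]
    abel
  have hzdiag : diagonal (fun _ : Fin m => (0:ℝ)) = (0 : Matrix (Fin m) (Fin m) ℝ) := by
    rw [show (fun _ : Fin m => (0:ℝ)) = (0 : Fin m → ℝ) from rfl]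
    exact Matrix.diagonal_zero
  have hfun1 : (fun i => f i * (d i ^ 2 * g i)) = fun _ : Fin m => (0:ℝ) := by
    funext i; by_cases hi : lam ≤ d i <;> simp [hfdef, hgdef, hi]
  have hBtC : Bhatᵀ * Cm = 0 := by
    rw [hBhat, hCmdef, hQmdef, hQcdef]
    simp only [Matrix.transpose_mul, Matrix.transpose_transpose, Matrix.diagonal_transpose,
      hSinvsym, Matrix.mul_assoc, hVtVZ, hGZ, hdiagZ, hfun1, hzdiag,
      Matrix.mul_zero, Matrix.zero_mul]
  have hCtB : Cmᵀ * Bhat = 0 := by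
    have h := congrArg Matrix.transpose hBtC
    simpa [Matrix.transpose_mul] using h
  have hAdecomp : Mᵀ * M = Bhatᵀ * Bhat + Cmᵀ * Cm := by
    rw [hMeq, Matrix.transpose_add, Matrix.add_mul, Matrix.mul_add, Matrix.mul_add,
      hBtC, hCtB]
    abel
  have hMQ : M * Qm = Bhat := by
    rw [hMeq, Matrix.add_mul, hBQ, hCQ, add_zero]
  have hQB : Qm * Bhatᵀ = Bhatᵀ := by
    have h := congrArg Matrix.transpose hBQ
    simpa [Matrix.transpose_mul, hQmsym] using h
  have hQC : Qm * Cmᵀ = 0 := by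
    have h := congrArg Matrix.transpose hCQ
    simpa [Matrix.transpose_mul, hQmsym] using h
  have hQmA : (Mᵀ * M) * Qm = Qm * (Mᵀ * M) := by
    rw [hAdecomp, Matrix.add_mul, Matrix.mul_add, Matrix.mul_assoc, hBQ,
      Matrix.mul_assoc, hCQ, Matrix.mul_zero, ← Matrix.mul_assoc, hQB,
      ← Matrix.mul_assoc, hQC, Matrix.zero_mul]
  -- the Gram matrix of M, basic properties
  have hAs : (Mᵀ * M)ᵀ = Mᵀ * M := by
    rw [Matrix.transpose_mul, Matrix.transpose_transpose]
  have hApsd : ∀ v, 0 ≤ v ⬝ᵥ (Mᵀ * M) *ᵥ v := by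
    intro v; rw [dot_gram]; exact dot_self_nonneg' _
  have hAform : ∀ u, u ⬝ᵥ (Mᵀ * M) *ᵥ u
      = (Bhat *ᵥ u) ⬝ᵥ (Bhat *ᵥ u) + (Cm *ᵥ u) ⬝ᵥ (Cm *ᵥ u) := by
    intro u
    rw [hAdecomp, Matrix.add_mulVec, dotProduct_add, dot_gram, dot_gram]
  -- associated forms of Bhat and Cm
  have hBassoc : Bhat = (Xᵀ * X)⁻¹ * (Xᵀ * Y * Qm) := by
    rw [hBhat]; simp only [Matrix.mul_assoc]
  -- the V-transform preserves norms
  have hVnorm : ∀ u : Fin m → ℝ, (Vᵀ *ᵥ u) ⬝ᵥ (Vᵀ *ᵥ u) = u ⬝ᵥ u := by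
    intro u
    have h := dot_gram Vᵀ u
    rw [Matrix.transpose_transpose, hVV'] at h
    rw [← h, Matrix.one_mulVec]
  -- the threshold bound μQ
  set eQ : Fin m → ℝ := fun i => if lam ≤ d i then (0:ℝ) else d i ^ 2 with heQdef
  set μQ : ℝ := Finset.univ.sup' Finset.univ_nonempty eQ with hμQdef
  have heQ0 : ∀ i, 0 ≤ eQ i := by
    intro i; rw [heQdef]; dsimp only
    by_cases hi : lam ≤ d i <;> simp [hi] <;> positivity
  have heQle : ∀ i, eQ i ≤ μQ := by
    intro i; exact Finset.le_sup' eQ (Finset.mem_univ i)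
  have hμQ0 : 0 ≤ μQ := by
    obtain ⟨i0⟩ := (inferInstance : Nonempty (Fin m))
    exact le_trans (heQ0 i0) (heQle i0)
  have hμQlt : μQ < lam ^ 2 := by
    rw [hμQdef, Finset.sup'_lt_iff]
    intro i _
    rw [heQdef]; dsimp only
    by_cases hi : lam ≤ d i
    · simp only [hi, if_true]; positivity
    · simp only [hi, if_false]
      push_neg at hi
      exact pow_lt_pow_left₀ hi (hd0 i) (by norm_num)
  -- lower bound of the form on the range of Qm
  have hfun2 : (fun i => f i * (d i ^ 2 * f i)) = fun i => d i ^ 2 * f i := by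
    funext i; by_cases hi : lam ≤ d i <;> simp [hfdef, hi]
  have hKB : (Xᵀ * Y * Qm)ᵀ * ((Xᵀ * X)⁻¹ * (Xᵀ * Y * Qm))
      = V * (diagonal (fun i => d i ^ 2 * f i) * Vᵀ) := by
    rw [hQmdef]
    simp only [Matrix.transpose_mul, Matrix.transpose_transpose, Matrix.diagonal_transpose,
      hSinvsym, Matrix.mul_assoc, hGZ, hVtVZ, hdiagZ, hfun2]
  have hQlow : ∀ u, Qm *ᵥ u = u → lam ^ 2 * (u ⬝ᵥ u) ≤ u ⬝ᵥ (Mᵀ * M) *ᵥ u := by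
    intro u hu
    have hBu : Bhat *ᵥ u = (Xᵀ * X)⁻¹ *ᵥ ((Xᵀ * Y * Qm) *ᵥ u) := by
      rw [hBassoc, ← Matrix.mulVec_mulVec]
    have h1 : ((Xᵀ * Y * Qm) *ᵥ u) ⬝ᵥ ((Xᵀ * X)⁻¹ *ᵥ ((Xᵀ * Y * Qm) *ᵥ u))
        ≤ (Bhat *ᵥ u) ⬝ᵥ (Bhat *ᵥ u) := by
      rw [hBu]; exact hSinv2 _
    have h2 : ((Xᵀ * Y * Qm) *ᵥ u) ⬝ᵥ ((Xᵀ * X)⁻¹ *ᵥ ((Xᵀ * Y * Qm) *ᵥ u))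
        = ∑ i, (d i ^ 2 * f i) * ((Vᵀ *ᵥ u) i) ^ 2 := by
      rw [dot_conj, hKB, qform']
    have h3 : u ⬝ᵥ u = ∑ i, f i * ((Vᵀ *ᵥ u) i) ^ 2 := by
      nth_rewrite 1 [← hu]
      rw [dotProduct_comm, hQmdef]
      exact qform V f u
    have h4 : lam ^ 2 * (u ⬝ᵥ u) ≤ ∑ i, (d i ^ 2 * f i) * ((Vᵀ *ᵥ u) i) ^ 2 := by
      rw [h3, Finset.mul_sum]
      apply Finset.sum_le_sum
      intro i _
      by_cases hi : lam ≤ d i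
      · have hf1 : f i = 1 := by rw [hfdef]; simp [hi]
        rw [hf1]
        have h5 : lam ^ 2 ≤ d i ^ 2 := pow_le_pow_left₀ hlam.le hi 2
        nlinarith [sq_nonneg ((Vᵀ *ᵥ u) i)]
      · have hf0 : f i = 0 := by rw [hfdef]; simp [hi]
        rw [hf0]
        simp
    have h5 := dot_self_nonneg' (Cm *ᵥ u)
    rw [hAform]
    linarith [h1, h2 ▸ h4]
  -- upper bound of the form on the kernel of Qm
  have hfun3 : (fun i => g i * (d i ^ 2 * g i)) = eQ := by
    funext i; rw [heQdef]; by_cases hi : lam ≤ d i <;> simp [hgdef, hi]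
  have hCassoc : Cm = Xᵀ * (Y * Qc) := by
    rw [hCmdef]; simp only [Matrix.mul_assoc]
  have hKC : Cmᵀ * ((Xᵀ * X)⁻¹ * Cm) = V * (diagonal eQ * Vᵀ) := by
    rw [hCmdef, hQcdef]
    simp only [Matrix.transpose_mul, Matrix.transpose_transpose, Matrix.diagonal_transpose,
      hSinvsym, Matrix.mul_assoc, hGZ, hVtVZ, hdiagZ, hfun3]
  have hQhigh : ∀ u, Qm *ᵥ u = 0 → u ⬝ᵥ (Mᵀ * M) *ᵥ u ≤ μQ * (u ⬝ᵥ u) := by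
    intro u hu
    have hBu0 : Bhat *ᵥ u = 0 := by
      rw [hBassoc, ← Matrix.mulVec_mulVec, ← Matrix.mulVec_mulVec, hu,
        Matrix.mulVec_zero, Matrix.mulVec_zero]
    have hs : (Cm *ᵥ u) ⬝ᵥ (Cm *ᵥ u) ≤ (Cm *ᵥ u) ⬝ᵥ ((Xᵀ * X)⁻¹ *ᵥ (Cm *ᵥ u)) := by
      have h := hSinv_ge (Cm *ᵥ u)
      have hCX : Cm *ᵥ u = Xᵀ *ᵥ ((Y * Qc) *ᵥ u) := by
        rw [hCassoc, ← Matrix.mulVec_mulVec]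
      exact h
    have h2 : (Cm *ᵥ u) ⬝ᵥ ((Xᵀ * X)⁻¹ *ᵥ (Cm *ᵥ u))
        = ∑ i, eQ i * ((Vᵀ *ᵥ u) i) ^ 2 := by
      rw [dot_conj, hKC, qform']
    have h4 : ∑ i, eQ i * ((Vᵀ *ᵥ u) i) ^ 2 ≤ μQ * (u ⬝ᵥ u) := by
      calc ∑ i, eQ i * ((Vᵀ *ᵥ u) i) ^ 2
          ≤ ∑ i, μQ * ((Vᵀ *ᵥ u) i) ^ 2 := by
            apply Finset.sum_le_sum
            intro i _
            exact mul_le_mul_of_nonneg_right (heQle i) (sq_nonneg _)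
        _ = μQ * ((Vᵀ *ᵥ u) ⬝ᵥ (Vᵀ *ᵥ u)) := by rw [dotsq, Finset.mul_sum]
        _ = μQ * (u ⬝ᵥ u) := by rw [hVnorm]
    rw [hAform, hBu0]
    simp only [dotProduct_zero, zero_dotProduct, zero_add]
    linarith [hs, h2 ▸ h4]
  -- ============ the SVD side ============
  set ff : Fin (min p m) → ℝ := fun i => if lam ≤ σM i then (1:ℝ) else 0 with hffdef
  set θ : Fin (min p m) → ℝ := fun i => if lam ≤ σM i then σM i else 0 with hθdef
  set Pm : Matrix (Fin m) (Fin m) ℝ := VM * diagonal ff * VMᵀ with hPmdef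
  have hffe2 : (fun i => ff i * ff i) = ff := by
    funext i; by_cases hi : lam ≤ σM i <;> simp [hffdef, hi]
  have hPmsym : Pmᵀ = Pm := by
    rw [hPmdef]
    simp [Matrix.transpose_mul, Matrix.diagonal_transpose, Matrix.mul_assoc]
  have hPm2 : Pm * Pm = Pm := by
    rw [hPmdef]
    simp only [Matrix.mul_assoc, hVMtVMZ, hdiagZk, hffe2]
  have hA2 : Mᵀ * M = VM * (diagonal (fun i => σM i * σM i) * VMᵀ) := by
    rw [hMsvd]
    simp only [Matrix.transpose_mul, Matrix.transpose_transpose, Matrix.diagonal_transpose,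
      Matrix.mul_assoc, hUMtUMZ, hdiagZk]
  have hfunθ : (fun i => σM i * ff i) = θ := by
    funext i; rw [hθdef]; by_cases hi : lam ≤ σM i <;> simp [hffdef, hi]
  have hMP : M * Pm = UM * diagonal θ * VMᵀ := by
    rw [hMsvd, hPmdef]
    simp only [Matrix.mul_assoc, hVMtVMZ, hdiagZk, hfunθ]
  have hcommP : (fun i => (σM i * σM i) * ff i) = fun i => ff i * (σM i * σM i) := by
    funext i; ring
  have hPmA : (Mᵀ * M) * Pm = Pm * (Mᵀ * M) := by
    rw [hA2, hPmdef]
    simp only [Matrix.mul_assoc, hVMtVMZ, hdiagZk, hcommP]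
  have hVMcontr : ∀ u : Fin m → ℝ, (VMᵀ *ᵥ u) ⬝ᵥ (VMᵀ *ᵥ u) ≤ u ⬝ᵥ u := by
    intro u
    have h1 := dot_gram VMᵀ u
    rw [Matrix.transpose_transpose] at h1
    rw [← h1]
    have hP0 : (VM * VMᵀ) * (VM * VMᵀ) = VM * VMᵀ := by
      simp only [Matrix.mul_assoc, hVMtVMZ]
    have hP0s : (VM * VMᵀ)ᵀ = VM * VMᵀ := by
      rw [Matrix.transpose_mul, Matrix.transpose_transpose]
    exact proj_form_le _ hP0s hP0 u
  -- threshold bound μP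
  set eP : Fin (min p m) → ℝ := fun i => if lam ≤ σM i then (0:ℝ) else σM i ^ 2 with hePdef
  set μP : ℝ := Finset.univ.sup' Finset.univ_nonempty eP with hμPdef
  have heP0 : ∀ i, 0 ≤ eP i := by
    intro i; rw [hePdef]; dsimp only
    by_cases hi : lam ≤ σM i <;> simp [hi] <;> positivity
  have hePle : ∀ i, eP i ≤ μP := by
    intro i; exact Finset.le_sup' eP (Finset.mem_univ i)
  have hμP0 : 0 ≤ μP := by
    obtain ⟨i0⟩ := (inferInstance : Nonempty (Fin (min p m)))
    exact le_trans (heP0 i0) (hePle i0)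
  have hμPlt : μP < lam ^ 2 := by
    rw [hμPdef, Finset.sup'_lt_iff]
    intro i _
    rw [hePdef]; dsimp only
    by_cases hi : lam ≤ σM i
    · simp only [hi, if_true]; positivity
    · simp only [hi, if_false]
      push_neg at hi
      exact pow_lt_pow_left₀ hi (hσ0 i) (by norm_num)
  have hPlow : ∀ u, Pm *ᵥ u = u → lam ^ 2 * (u ⬝ᵥ u) ≤ u ⬝ᵥ (Mᵀ * M) *ᵥ u := by
    intro u hu
    have h1 : u ⬝ᵥ u = ∑ i, ff i * ((VMᵀ *ᵥ u) i) ^ 2 := by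
      nth_rewrite 1 [← hu]
      rw [dotProduct_comm, hPmdef]
      exact qform VM ff u
    have h2 : u ⬝ᵥ (Mᵀ * M) *ᵥ u = ∑ i, (σM i * σM i) * ((VMᵀ *ᵥ u) i) ^ 2 := by
      rw [hA2]
      exact qform' VM _ u
    rw [h1, h2, Finset.mul_sum]
    apply Finset.sum_le_sum
    intro i _
    by_cases hi : lam ≤ σM i
    · have hf1 : ff i = 1 := by rw [hffdef]; simp [hi]
      rw [hf1]
      have hll : lam * lam ≤ σM i * σM i :=
        mul_le_mul hi hi hlam.le (le_trans hlam.le hi)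
      nlinarith [sq_nonneg ((VMᵀ *ᵥ u) i), hll]
    · have hf0 : ff i = 0 := by rw [hffdef]; simp [hi]
      rw [hf0]
      nlinarith [sq_nonneg ((VMᵀ *ᵥ u) i), sq_nonneg (σM i), mul_self_nonneg (σM i),
        sq_nonneg (σM i * (VMᵀ *ᵥ u) i)]
  have hPhigh : ∀ u, Pm *ᵥ u = 0 → u ⬝ᵥ (Mᵀ * M) *ᵥ u ≤ μP * (u ⬝ᵥ u) := by
    intro u hu
    have hVMP : VMᵀ * Pm = diagonal ff * VMᵀ := by
      rw [hPmdef]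
      simp only [Matrix.mul_assoc, hVMtVMZ]
    have hx : ∀ i, ff i * ((VMᵀ *ᵥ u) i) = 0 := by
      intro i
      have h := congrFun (congrArg (fun z => VMᵀ *ᵥ z) hu) i
      simp only [Matrix.mulVec_mulVec] at h
      rw [hVMP, ← Matrix.mulVec_mulVec] at h
      simpa [Matrix.mulVec_diagonal] using h
    have h2 : u ⬝ᵥ (Mᵀ * M) *ᵥ u = ∑ i, (σM i * σM i) * ((VMᵀ *ᵥ u) i) ^ 2 := by
      rw [hA2]
      exact qform' VM _ u
    rw [h2]
    calc ∑ i, (σM i * σM i) * ((VMᵀ *ᵥ u) i) ^ 2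
        ≤ ∑ i, μP * ((VMᵀ *ᵥ u) i) ^ 2 := by
          apply Finset.sum_le_sum
          intro i _
          by_cases hi : lam ≤ σM i
          · have hf1 : ff i = 1 := by rw [hffdef]; simp [hi]
            have hx0 : (VMᵀ *ᵥ u) i = 0 := by
              have := hx i; rw [hf1, one_mul] at this; exact this
            rw [hx0]
            simp
          · have : eP i = σM i ^ 2 := by rw [hePdef]; simp [hi]
            have h3 : σM i * σM i ≤ μP := by
              rw [← pow_two] at *
              exact le_trans (le_of_eq this.symm) (hePle i)
            exact mul_le_mul_of_nonneg_right h3 (sq_nonneg _)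
      _ = μP * ((VMᵀ *ᵥ u) ⬝ᵥ (VMᵀ *ᵥ u)) := by rw [dotsq, Finset.mul_sum]
      _ ≤ μP * (u ⬝ᵥ u) := mul_le_mul_of_nonneg_left (hVMcontr u) hμP0
  -- ============ conclusion ============
  have hfinal : Pm = Qm :=
    proj_unique (Mᵀ * M) Pm Qm (lam ^ 2) μP μQ (by positivity) hμP0 hμPlt hμQ0 hμQlt
      hAs hApsd hPmsym hPm2 hPmA hQmsym hQm2 hQmA hPlow hPhigh hQlow hQhigh
  calc Bhat = M * Qm := hMQ.symm
    _ = M * Pm := by rw [hfinal]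
    _ = UM * diagonal θ * VMᵀ := hMP
end
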